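/- Assume ZFU together with the assertion that every set of urelements is well-orderable. Then there is a set u such that every set of urelements w disjoint from u can be duplicated: w is equinumerous with some set of urelements w' disjoint from both u and w. -/

import Mathlib

/-!
Common framework for formalizing "Reflection in second-order set theory with abundant
urelements bi-interprets a supercompact cardinal" (Hamkins–Yao).

We represent first-order languages via Mathlib's `FirstOrder.Language`, models of the
various (urelement) set theories semantically, as types equipped with relations
satisfying the (first-order–scheme) axioms, and interpretations/bi-interpretations
of structures and theories via quotients of formula-defined domains.
-/

universe u v

namespace UST

open FirstOrder Language Cardinal

/-! ### Purely relational languages with unary and binary relation symbols -/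

/-- The relation symbols: `r1`-many unary symbols, `r2`-many binary symbols. -/
def rels (r1 r2 : Type) : ℕ → Type
  | 1 => r1
  | 2 => r2
  | _ => Empty

/-- The relational language with `r1`-many unary and `r2`-many binary relation symbols. -/
def relLang (r1 r2 : Type) : Language :=
  ⟨fun _ => Empty, rels r1 r2⟩

instance (r1 r2 : Type) : (relLang r1 r2).IsRelational :=
  fun _ => inferInstanceAs (IsEmpty Empty)

/-- Build a structure for a purely relational language from interpretations of the
unary and binary relation symbols. -/
def relStructure {M : Type u} {r1 r2 : Type} (u1 : r1 → M → Prop)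
    (u2 : r2 → M → M → Prop) : (relLang r1 r2).Structure M where
  funMap := fun f _ => Empty.elim f
  RelMap {n} :=
    match n with
    | 0 => fun R _ => Empty.elim R
    | 1 => fun R v => u1 R (v 0)
    | 2 => fun R v => u2 R (v 0) (v 1)
    | _ + 3 => fun R _ => Empty.elim R

/-- The language of pure set theory: one binary relation `∈`. -/
abbrev LST : Language := relLang Empty Unit
/-- The language of urelement set theory `{∈, 𝔸}`: a unary atom predicate and `∈`. -/
abbrev LU : Language := relLang Unit Unit
/-- The language of urelement set theory with an atom-enumeration predicate `{∈, 𝔸⃗}`: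
two binary relations, `false ↦ ∈` and `true ↦ 𝔸⃗`. -/
abbrev LUvec : Language := relLang Empty Bool
/-- One-sorted language for second-order (class) set theory: unary `isClass`, binary `∈`. -/
abbrev L2 : Language := relLang Unit Unit
/-- One-sorted language for second-order urelement set theory:
unary `false ↦ isClass`, `true ↦ 𝔸`; binary `∈`. -/
abbrev L2U : Language := relLang Bool Unit
/-- One-sorted language for second-order urelement set theory with enumeration predicate:
unary `isClass`; binary `false ↦ ∈`, `true ↦ 𝔸⃗`. -/
abbrev L2Uvec : Language := relLang Unit Bool
/-- The language of set theory with `n` additional unary (class-parameter) predicates. -/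
abbrev LP (n : ℕ) : Language := relLang (Fin n) Unit
/-- The urelement set theory language with the atom predicate (`none`) and `n` additional
unary class-parameter predicates (`some i`). -/
abbrev LPU (n : ℕ) : Language := relLang (Option (Fin n)) Unit

section Str
variable {M : Type u}

def strLST (mem : M → M → Prop) : LST.Structure M :=
  relStructure (fun e _ => Empty.elim e) (fun _ => mem)

def strLU (atom : M → Prop) (mem : M → M → Prop) : LU.Structure M :=
  relStructure (fun _ => atom) (fun _ => mem)

def strLUvec (mem Avec : M → M → Prop) : LUvec.Structure M :=
  relStructure (fun e _ => Empty.elim e) (fun b => match b with | false => mem | true => Avec)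

def strL2 (isClass : M → Prop) (mem : M → M → Prop) : L2.Structure M :=
  relStructure (fun _ => isClass) (fun _ => mem)

def strL2U (isClass atom : M → Prop) (mem : M → M → Prop) : L2U.Structure M :=
  relStructure (fun b => match b with | false => isClass | true => atom) (fun _ => mem)

def strL2Uvec (isClass : M → Prop) (mem Avec : M → M → Prop) : L2Uvec.Structure M :=
  relStructure (fun _ => isClass) (fun b => match b with | false => mem | true => Avec)

def strLP (n : ℕ) (P : Fin n → M → Prop) (mem : M → M → Prop) : (LP n).Structure M :=
  relStructure P (fun _ => mem)

def strLPU (n : ℕ) (atom : M → Prop) (P : Fin n → M → Prop) (mem : M → M → Prop) :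
    (LPU n).Structure M :=
  relStructure (fun o => Option.elim o atom P) (fun _ => mem)

/-- Realization of a bounded formula with respect to an explicitly given structure. -/
def Rlz {L : Language} (S : L.Structure M) {α : Type} {l : ℕ}
    (φ : L.BoundedFormula α l) (vs : α → M) (xs : Fin l → M) : Prop :=
  letI := S; φ.Realize vs xs

/-- Realization of a formula with respect to an explicitly given structure. -/
def RlzF {L : Language} (S : L.Structure M) {α : Type} (φ : L.Formula α) (vs : α → M) : Prop :=
  Rlz S φ vs ![]

/-- Realization of a sentence (formula with `Empty` variables) w.r.t. a given structure. -/
def RlzE {L : Language} (S : L.Structure M) (φ : L.Formula Empty) : Prop :=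
  RlzF S φ (fun e => e.elim)

end Str

/-! ### Internal set-theoretic notions in a membership structure -/

section Internal
variable {M : Type u} (isSet : M → Prop) (mem : M → M → Prop)

/-- `p` is the Kuratowski ordered pair `⟨x, y⟩`. -/
def IsOPair (p x y : M) : Prop :=
  isSet p ∧ ∃ s d, isSet s ∧ isSet d ∧ (∀ z, mem z p ↔ (z = s ∨ z = d)) ∧
    (∀ z, mem z s ↔ z = x) ∧ (∀ z, mem z d ↔ (z = x ∨ z = y))

/-- The ordered pair `⟨x, y⟩` is a member of `r`. -/
def PairIn (r x y : M) : Prop := ∃ p, mem p r ∧ IsOPair isSet mem p x y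

def TransitiveS (t : M) : Prop := ∀ y, mem y t → ∀ z, mem z y → mem z t

def SubsetS (x y : M) : Prop := ∀ z, mem z x → mem z y

def IsEmptySet (e : M) : Prop := isSet e ∧ ∀ z, ¬ mem z e

/-- von Neumann ordinals: hereditarily transitive sets (all members sets). -/
def IsOrdinal (x : M) : Prop :=
  isSet x ∧ (∀ y, mem y x → isSet y) ∧ TransitiveS mem x ∧ ∀ y, mem y x → TransitiveS mem y

def IsSuccOrd (s α : M) : Prop := ∀ z, mem z s ↔ (mem z α ∨ z = α)

def IsLimitOrd (x : M) : Prop :=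
  IsOrdinal isSet mem x ∧ (∃ y, mem y x) ∧ ∀ y, mem y x → ∃ z, mem z x ∧ mem y z

/-- `n` is `ω`, the least limit ordinal. -/
def IsOmega (n : M) : Prop :=
  IsLimitOrd isSet mem n ∧ ∀ y, mem y n → ¬ IsLimitOrd isSet mem y

/-- `f` is an (internal) function with domain `a`. -/
def IsFuncOn (f a : M) : Prop :=
  isSet f ∧ (∀ p, mem p f → ∃ x y, mem x a ∧ IsOPair isSet mem p x y) ∧
    (∀ x, mem x a → ∃ y, PairIn isSet mem f x y) ∧
    ∀ x y y', PairIn isSet mem f x y → PairIn isSet mem f x y' → y = y'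

/-- `f` is an injective function from `a` into `b`. -/
def IsInjFuncInto (f a b : M) : Prop :=
  IsFuncOn isSet mem f a ∧ (∀ x y, PairIn isSet mem f x y → mem y b) ∧
    ∀ x x' y, PairIn isSet mem f x y → PairIn isSet mem f x' y → x = x'

/-- `w` and `w'` are equinumerous, as witnessed by an internal bijection. -/
def EquinumerousI (w w' : M) : Prop :=
  ∃ f, IsInjFuncInto isSet mem f w w' ∧ ∀ y, mem y w' → ∃ x, mem x w ∧ PairIn isSet mem f x y

/-- `r` is an internal well-ordering of the set `w`: a linear order on `w` such that every
nonempty internal subset of `w` has a least element. -/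
def IsWellOrderOn (r w : M) : Prop :=
  isSet r ∧ (∀ p, mem p r → ∃ x y, mem x w ∧ mem y w ∧ IsOPair isSet mem p x y) ∧
    (∀ x, mem x w → ¬ PairIn isSet mem r x x) ∧
    (∀ x y z, PairIn isSet mem r x y → PairIn isSet mem r y z → PairIn isSet mem r x z) ∧
    (∀ x y, mem x w → mem y w → (x = y ∨ PairIn isSet mem r x y ∨ PairIn isSet mem r y x)) ∧
    ∀ s, isSet s → (∃ x, mem x s) → (∀ x, mem x s → mem x w) →
      ∃ m, mem m s ∧ ∀ x, mem x s → x = m ∨ PairIn isSet mem r m x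

def WellOrderable (w : M) : Prop := ∃ r, IsWellOrderOn isSet mem r w

def IsCardinal (κ : M) : Prop :=
  IsOrdinal isSet mem κ ∧ ∀ α, mem α κ → ¬ EquinumerousI isSet mem α κ

def IsLargestCardinal (lam : M) : Prop :=
  IsCardinal isSet mem lam ∧ ∀ κ, IsCardinal isSet mem κ → κ = lam ∨ mem κ lam

def PowersetOf (p x : M) : Prop :=
  isSet p ∧ ∀ z, mem z p ↔ (isSet z ∧ SubsetS mem z x)

/-- `κ` is a regular ordinal: the range of any internal function from an element of `κ`
into `κ` is bounded below `κ`. -/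
def IsRegular (κ : M) : Prop :=
  IsOrdinal isSet mem κ ∧ (∃ y, mem y κ) ∧
    ∀ α f, mem α κ → IsFuncOn isSet mem f α → (∀ x y, PairIn isSet mem f x y → mem y κ) →
      ∃ β, mem β κ ∧ ∀ x y, PairIn isSet mem f x y → mem y β

/-- `κ` is inaccessible: regular, above `ω`, and a strong limit (power sets of its
elements exist and have size less than `κ`). -/
def IsInaccessible (κ : M) : Prop :=
  IsRegular isSet mem κ ∧ (∀ n, IsOmega isSet mem n → mem n κ) ∧
    ∀ α, mem α κ → ∃ p, PowersetOf isSet mem p α ∧ ∃ β, mem β κ ∧ EquinumerousI isSet mem p β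

/-- `x` has size less than (the cardinal) `κ`: it is equinumerous with some element of `κ`. -/
def SizeLt (x κ : M) : Prop := ∃ β, mem β κ ∧ EquinumerousI isSet mem x β

/-- `x` has size at most that of `lam`: it injects into `lam`. -/
def SizeLe (x lam : M) : Prop := ∃ f, IsInjFuncInto isSet mem f x lam

/-- `t` codes the tuple `v` (as iterated Kuratowski pairs, with `∅` for the empty tuple). -/
def CodesTuple : (n : ℕ) → M → (Fin n → M) → Prop
  | 0, p, _ => IsEmptySet isSet mem p
  | n + 1, p, v => ∃ q, CodesTuple n q (fun i => v i.succ) ∧ IsOPair isSet mem p (v 0) q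

end Internal

/-! ### Urelement notions -/

section Urelem
variable {M : Type u} (atom : M → Prop) (mem : M → M → Prop)

def SetOfAtoms (w : M) : Prop := ¬ atom w ∧ ∀ x, mem x w → atom x

def DisjointS (w u : M) : Prop := ¬ ∃ z, mem z w ∧ mem z u

/-- `a` belongs to every transitive set containing `x`; for an atom `a` this expresses
that `a` appears in the transitive closure of `{x}`, i.e., in the support (kernel) of `x`. -/
def InKernel (a x : M) : Prop := ∀ t, TransitiveS mem t → mem x t → mem a t

/-- `x` is a pure set: no atoms appear in its kernel. -/
def IsPure (x : M) : Prop := ¬ atom x ∧ ∀ a, atom a → ¬ InKernel mem a x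

/-- `x` belongs to `V(u)`: all atoms in the kernel of `x` lie in `u`. -/
def InVof (u x : M) : Prop := ∀ a, atom a → InKernel mem a x → mem a u

/-- An automorphism of the urelement universe `⟨M, ∈, 𝔸⟩`. -/
structure UAut (atom : M → Prop) (mem : M → M → Prop) where
  toEquiv : M ≃ M
  mem_iff : ∀ x y : M, mem (toEquiv x) (toEquiv y) ↔ mem x y
  atom_iff : ∀ x : M, atom (toEquiv x) ↔ atom x

end Urelem

/-! ### First-order axioms and theories -/

section FOAxioms
variable {M : Type u} (atom : M → Prop) (mem : M → M → Prop)

def Extensionality : Prop :=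
  ∀ x y, ¬ atom x → ¬ atom y → (∀ z, mem z x ↔ mem z y) → x = y

def AtomsEmpty : Prop := ∀ a, atom a → ∀ x, ¬ mem x a

def FoundationAx : Prop :=
  ∀ x, (∃ y, mem y x) → ∃ y, mem y x ∧ ∀ z, mem z y → ¬ mem z x

def PairingAx : Prop := ∀ x y, ∃ p, ¬ atom p ∧ ∀ z, mem z p ↔ (z = x ∨ z = y)

def UnionAx : Prop := ∀ x, ∃ u, ¬ atom u ∧ ∀ z, mem z u ↔ ∃ y, mem y x ∧ mem z y

def PowerAx : Prop := ∀ x, ∃ p, PowersetOf (fun z => ¬ atom z) mem p x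

def InfinityAx : Prop :=
  ∃ I, ¬ atom I ∧ (∃ e, mem e I ∧ ¬ atom e ∧ ∀ z, ¬ mem z e) ∧
    ∀ x, mem x I → ∃ s, mem s I ∧ ¬ atom s ∧ ∀ z, mem z s ↔ (mem z x ∨ z = x)

/-- The axiom of choice: every family of nonempty pairwise-disjoint sets has a selector. -/
def ChoiceAx : Prop :=
  ∀ F, (∀ x, mem x F → ∃ y, mem y x) →
    (∀ x y, mem x F → mem y F → x ≠ y → ¬ ∃ z, mem z x ∧ mem z y) →
    ∃ C, ∀ x, mem x F → ∃ z, mem z x ∧ mem z C ∧ ∀ w, mem w x → mem w C → w = z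

/-- The well-ordering principle (the appropriate form of choice without power set). -/
def WOPrinciple : Prop := ∀ x, ¬ atom x → WellOrderable (fun z => ¬ atom z) mem x

/-- The separation scheme for first-order formulas of the language `L` (with parameters). -/
def SeparationScheme (L : Language) (S : L.Structure M) : Prop :=
  ∀ (k : ℕ) (φ : L.BoundedFormula (Fin k) 1) (p : Fin k → M) (a : M),
    ∃ b, ¬ atom b ∧ ∀ x, mem x b ↔ (mem x a ∧ Rlz S φ p ![x])

/-- The collection scheme for first-order formulas of the language `L` (with parameters). -/
def CollectionScheme (L : Language) (S : L.Structure M) : Prop :=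
  ∀ (k : ℕ) (φ : L.BoundedFormula (Fin k) 2) (p : Fin k → M) (a : M),
    (∀ x, mem x a → ∃ y, Rlz S φ p ![x, y]) →
    ∃ b, ¬ atom b ∧ ∀ x, mem x a → ∃ y, mem y b ∧ Rlz S φ p ![x, y]

end FOAxioms

section FOTheories
variable {M : Type u}

/-- Zermelo–Fraenkel set theory `ZF`, semantically: the axioms of extensionality,
foundation, pairing, union, power set, infinity, and the separation and collection
schemes for first-order formulas of the language `{∈}`. -/
def ZF (mem : M → M → Prop) : Prop :=
  Extensionality (fun _ => False) mem ∧ FoundationAx mem ∧ PairingAx (fun _ => False) mem ∧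
    UnionAx (fun _ => False) mem ∧ PowerAx (fun _ => False) mem ∧
    InfinityAx (fun _ => False) mem ∧
    SeparationScheme (fun _ => False) mem LST (strLST mem) ∧
    CollectionScheme (fun _ => False) mem LST (strLST mem)

def ZFC (mem : M → M → Prop) : Prop := ZF mem ∧ ChoiceAx mem

/-- `ZFC⁻`: `ZFC` without the power set axiom, with collection and separation, and with
choice in the form of the well-ordering principle. -/
def ZFCminus (mem : M → M → Prop) : Prop :=
  Extensionality (fun _ => False) mem ∧ FoundationAx mem ∧ PairingAx (fun _ => False) mem ∧
    UnionAx (fun _ => False) mem ∧ InfinityAx (fun _ => False) mem ∧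
    SeparationScheme (fun _ => False) mem LST (strLST mem) ∧
    CollectionScheme (fun _ => False) mem LST (strLST mem) ∧
    WOPrinciple (fun _ => False) mem

/-- Urelement set theory `ZFU` in the language `{∈, 𝔸}`: extensionality for sets,
atoms have no members, foundation, pairing, union, power set, infinity, and the
separation and collection schemes. -/
def ZFU (atom : M → Prop) (mem : M → M → Prop) : Prop :=
  Extensionality atom mem ∧ AtomsEmpty atom mem ∧ FoundationAx mem ∧ PairingAx atom mem ∧
    UnionAx atom mem ∧ PowerAx atom mem ∧ InfinityAx atom mem ∧
    SeparationScheme atom mem LU (strLU atom mem) ∧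
    CollectionScheme atom mem LU (strLU atom mem)

def ZFCU (atom : M → Prop) (mem : M → M → Prop) : Prop := ZFU atom mem ∧ ChoiceAx mem

/-- `ZFCU⁻`: urelement set theory with choice (well-ordering principle) but without power set. -/
def ZFCUminus (atom : M → Prop) (mem : M → M → Prop) : Prop :=
  Extensionality atom mem ∧ AtomsEmpty atom mem ∧ FoundationAx mem ∧ PairingAx atom mem ∧
    UnionAx atom mem ∧ InfinityAx atom mem ∧
    SeparationScheme atom mem LU (strLU atom mem) ∧
    CollectionScheme atom mem LU (strLU atom mem) ∧
    WOPrinciple atom mem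

/-- The atoms of a structure for the language `{∈, 𝔸⃗}`: objects enumerated by `𝔸⃗`. -/
def atomOfVec (Avec : M → M → Prop) : M → Prop := fun x => ∃ i, Avec i x

/-- Urelement set theory `ZFU⃗` in the language `{∈, 𝔸⃗}` with the atom-enumeration
predicate, whose schemes are for formulas of this extended language. -/
def ZFUvec (mem Avec : M → M → Prop) : Prop :=
  Extensionality (atomOfVec Avec) mem ∧ AtomsEmpty (atomOfVec Avec) mem ∧ FoundationAx mem ∧
    PairingAx (atomOfVec Avec) mem ∧ UnionAx (atomOfVec Avec) mem ∧
    PowerAx (atomOfVec Avec) mem ∧ InfinityAx (atomOfVec Avec) mem ∧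
    SeparationScheme (atomOfVec Avec) mem LUvec (strLUvec mem Avec) ∧
    CollectionScheme (atomOfVec Avec) mem LUvec (strLUvec mem Avec)

def ZFCUvec (mem Avec : M → M → Prop) : Prop := ZFUvec mem Avec ∧ ChoiceAx mem

end FOTheories
/-! ### First-order reflection and dependent choice in urelement set theory -/

section FORefl
variable {M : Type u} (atom : M → Prop) (mem : M → M → Prop)

/-- The induced `{∈, 𝔸}`-structure on the members of `v`. -/
def strLUsub (v : M) : LU.Structure {x : M // mem x v} :=
  strLU (fun a => atom a.1) (fun a b => mem a.1 b.1)

/-- The first-order reflection principle for urelement set theory: for every set `p` and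
every formula `φ` of the language `{∈, 𝔸}`, there is a transitive set `v` containing `p`
such that `φ` (with any parameters from `v`) is absolute between `v` and the universe. -/
def FOReflection : Prop :=
  ∀ (k : ℕ) (φ : LU.Formula (Fin k)) (p : M),
    ∃ v, ¬ atom v ∧ TransitiveS mem v ∧ mem p v ∧
      ∀ q : Fin k → {x : M // mem x v},
        (RlzF (strLUsub atom mem v) φ q ↔ RlzF (strLU atom mem) φ (fun i => (q i).1))

/-- The `ω`-dependent choice scheme for definable class relations, with set parameters:
if `χ` defines a nonempty class `X` and `ρ` defines a relation `R` on `X` such that every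
element of `X` has an `R`-successor in `X`, then there is an internal `ω`-sequence
threading `R`. -/
def OmegaDCScheme : Prop :=
  ∀ (k : ℕ) (χ : LU.BoundedFormula (Fin k) 1) (ρ : LU.BoundedFormula (Fin k) 2)
    (p : Fin k → M),
    (∃ x, Rlz (strLU atom mem) χ p ![x]) →
    (∀ x, Rlz (strLU atom mem) χ p ![x] →
      ∃ y, Rlz (strLU atom mem) χ p ![y] ∧ Rlz (strLU atom mem) ρ p ![x, y]) →
    ∃ om f, IsOmega (fun z => ¬ atom z) mem om ∧ IsFuncOn (fun z => ¬ atom z) mem f om ∧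
      (∀ n y, mem n om → PairIn (fun z => ¬ atom z) mem f n y →
        Rlz (strLU atom mem) χ p ![y]) ∧
      ∀ n n' y y', mem n om → mem n' om → IsSuccOrd mem n' n →
        PairIn (fun z => ¬ atom z) mem f n y → PairIn (fun z => ¬ atom z) mem f n' y' →
        Rlz (strLU atom mem) ρ p ![y, y']

end FORefl
/-! ### Second-order (class) set theory, in a one-sorted presentation

A model of second-order (urelement) set theory is presented as a type `M` together with
predicates `isClass` (distinguishing the classes from the first-order objects) and `atom`,
and a membership relation `mem`.  Pure class theories take `atom := fun _ => False`. -/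

section ClassModels
variable {M : Type u} (isClass atom : M → Prop) (mem : M → M → Prop)

def IsObj (x : M) : Prop := ¬ isClass x

/-- The sets of a class model: first-order objects that are not atoms. -/
def IsSetO (x : M) : Prop := ¬ isClass x ∧ ¬ atom x

def Sorting : Prop := (∀ x y, mem x y → ¬ isClass x) ∧ (∀ a, atom a → ¬ isClass a)

def ClassExt : Prop := ∀ X Y, isClass X → isClass Y → (∀ x, mem x X ↔ mem x Y) → X = Y

def SetExt : Prop :=
  ∀ x y, IsSetO isClass atom x → IsSetO isClass atom y → (∀ z, mem z x ↔ mem z y) → x = y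

def FoundationO : Prop :=
  ∀ x, ¬ isClass x → (∃ y, mem y x) → ∃ y, mem y x ∧ ∀ z, mem z y → ¬ mem z x

def PairingO : Prop :=
  ∀ x y, IsObj isClass x → IsObj isClass y →
    ∃ p, IsSetO isClass atom p ∧ ∀ z, mem z p ↔ (z = x ∨ z = y)

def UnionO : Prop :=
  ∀ x, IsObj isClass x → ∃ s, IsSetO isClass atom s ∧ ∀ z, mem z s ↔ ∃ y, mem y x ∧ mem z y

def PowerO : Prop :=
  ∀ x, IsObj isClass x → ∃ p, IsSetO isClass atom p ∧
    ∀ z, mem z p ↔ (IsSetO isClass atom z ∧ SubsetS mem z x)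

def InfinityO : Prop :=
  ∃ I, IsSetO isClass atom I ∧ (∃ e, mem e I ∧ IsSetO isClass atom e ∧ ∀ z, ¬ mem z e) ∧
    ∀ x, mem x I → ∃ s, mem s I ∧ IsSetO isClass atom s ∧ ∀ z, mem z s ↔ (mem z x ∨ z = x)

def ChoiceO : Prop :=
  ∀ F, IsObj isClass F → (∀ x, mem x F → ∃ y, mem y x) →
    (∀ x y, mem x F → mem y F → x ≠ y → ¬ ∃ z, mem z x ∧ mem z y) →
    ∃ C, IsObj isClass C ∧ ∀ x, mem x F → ∃ z, mem z x ∧ mem z C ∧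
      ∀ w, mem w x → mem w C → w = z

/-- Every subclass of a set is a set (class-parameter separation). -/
def ClassSeparation : Prop :=
  ∀ C, isClass C → ∀ a, IsObj isClass a →
    ∃ b, IsSetO isClass atom b ∧ ∀ x, mem x b ↔ (mem x a ∧ mem x C)

/-- Collection for class relations: if the class `C` (of ordered pairs) relates every
element of the set `a` to some object, then witnesses can be collected into a set. -/
def ClassCollection : Prop :=
  ∀ C, isClass C → ∀ a, IsObj isClass a →
    (∀ x, mem x a → ∃ y, IsObj isClass y ∧ PairIn (IsSetO isClass atom) mem C x y) →
    ∃ b, IsSetO isClass atom b ∧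
      ∀ x, mem x a → ∃ y, mem y b ∧ PairIn (IsSetO isClass atom) mem C x y

/-- The global well-order principle: some class well-orders the first-order objects,
with every nonempty class having a least element. -/
def GlobalWellOrder : Prop :=
  ∃ W, isClass W ∧
    (∀ p, mem p W → ∃ x y, IsObj isClass x ∧ IsObj isClass y ∧
      IsOPair (IsSetO isClass atom) mem p x y) ∧
    (∀ x, IsObj isClass x → ¬ PairIn (IsSetO isClass atom) mem W x x) ∧
    (∀ x y z, PairIn (IsSetO isClass atom) mem W x y →
      PairIn (IsSetO isClass atom) mem W y z → PairIn (IsSetO isClass atom) mem W x z) ∧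
    (∀ x y, IsObj isClass x → IsObj isClass y →
      (x = y ∨ PairIn (IsSetO isClass atom) mem W x y ∨
        PairIn (IsSetO isClass atom) mem W y x)) ∧
    ∀ C, isClass C → (∃ x, mem x C) →
      ∃ m, mem m C ∧ ∀ x, mem x C → x = m ∨ PairIn (IsSetO isClass atom) mem W m x

/-- Full (second-order) class comprehension for formulas of the ambient one-sorted
language `L`, whose quantifiers range over both objects and classes. -/
def SOComprehension (L : Language) (S : L.Structure M) : Prop :=
  ∀ (k : ℕ) (φ : L.BoundedFormula (Fin k) 1) (p : Fin k → M),
    ∃ D, isClass D ∧ ∀ x, IsObj isClass x → (mem x D ↔ Rlz S φ p ![x])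

/-- The type of first-order objects of a class model. -/
def Osub (isClass : M → Prop) : Type u := {x : M // ¬ isClass x}

/-- The first-order part of an urelement class model, with `n` class parameters
interpreted as unary predicates. -/
def strObjU (n : ℕ) (Cs : Fin n → M) : (LPU n).Structure (Osub isClass) :=
  strLPU n (fun x => atom x.1) (fun i x => mem x.1 (Cs i)) (fun x y => mem x.1 y.1)

/-- The first-order part of a pure class model, with `n` class parameters. -/
def strObjP (n : ℕ) (Cs : Fin n → M) : (LP n).Structure (Osub isClass) :=
  strLP n (fun i x => mem x.1 (Cs i)) (fun x y => mem x.1 y.1)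

/-- First-order class comprehension (urelement version): comprehension for formulas
whose quantifiers range over the first-order objects only, allowing class parameters. -/
def FOComprehensionU : Prop :=
  ∀ (n k : ℕ) (Cs : Fin n → M), (∀ i, isClass (Cs i)) →
    ∀ (φ : (LPU n).BoundedFormula (Fin k) 1) (p : Fin k → Osub isClass),
      ∃ D, isClass D ∧ ∀ x : Osub isClass,
        mem x.1 D ↔ Rlz (strObjU isClass atom mem n Cs) φ p ![x]

/-- First-order class comprehension (pure version). -/
def FOComprehensionP : Prop :=
  ∀ (n k : ℕ) (Cs : Fin n → M), (∀ i, isClass (Cs i)) →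
    ∀ (φ : (LP n).BoundedFormula (Fin k) 1) (p : Fin k → Osub isClass),
      ∃ D, isClass D ∧ ∀ x : Osub isClass,
        mem x.1 D ↔ Rlz (strObjP isClass mem n Cs) φ p ![x]

/-- The class choice principle `CC` for formulas of the ambient language `L`: if every
`i ∈ I` has a class `X` with `φ(i, X)`, then there is a single class `Y ⊆ I × V` whose
sections witness this. -/
def ClassChoice (L : Language) (S : L.Structure M) : Prop :=
  ∀ (k : ℕ) (φ : L.BoundedFormula (Fin k) 2) (p : Fin k → M) (I : M), isClass I →
    (∀ i, mem i I → ∃ X, isClass X ∧ Rlz S φ p ![i, X]) →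
    ∃ Y, isClass Y ∧ ∀ i, mem i I → ∃ X, isClass X ∧
      (∀ x, IsObj isClass x → (mem x X ↔ PairIn (IsSetO isClass atom) mem Y i x)) ∧
      Rlz S φ p ![i, X]

/-- The common axioms of the second-order urelement set theories: sorting, extensionality
for sets and for classes, atoms empty, foundation, pairing, union, power set, infinity,
class separation, and class collection. -/
def ClassBase : Prop :=
  Sorting isClass atom mem ∧ ClassExt isClass mem ∧ SetExt isClass atom mem ∧
    AtomsEmpty atom mem ∧ FoundationO isClass mem ∧ PairingO isClass atom mem ∧
    UnionO isClass atom mem ∧ PowerO isClass atom mem ∧ InfinityO isClass atom mem ∧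
    ClassSeparation isClass atom mem ∧ ClassCollection isClass atom mem

/-- Gödel–Bernays set theory with urelements, with choice for sets but without the
global choice principle. -/
def GBcU : Prop :=
  ClassBase isClass atom mem ∧ FOComprehensionU isClass atom mem ∧ ChoiceO isClass mem

/-- Gödel–Bernays set theory with urelements `GBCU`, including global choice in the form
of a global well-order class. -/
def GBCU : Prop :=
  ClassBase isClass atom mem ∧ FOComprehensionU isClass atom mem ∧
    GlobalWellOrder isClass atom mem

/-- Kelley–Morse set theory with urelements `KMU`. -/
def KMU : Prop :=
  ClassBase isClass atom mem ∧ SOComprehension isClass mem L2U (strL2U isClass atom mem) ∧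
    GlobalWellOrder isClass atom mem

/-- The class choice principle for urelement class models. -/
def CCU : Prop := ClassChoice isClass atom mem L2U (strL2U isClass atom mem)

end ClassModels

section PureClassModels
variable {M : Type u} (isClass : M → Prop) (mem : M → M → Prop)

/-- Gödel–Bernays set theory `GBc` with choice for sets but not global choice. -/
def GBc : Prop :=
  ClassBase isClass (fun _ => False) mem ∧ FOComprehensionP isClass mem ∧
    ChoiceO isClass mem

/-- Gödel–Bernays set theory `GBC` with the global well-order principle. -/
def GBC : Prop :=
  ClassBase isClass (fun _ => False) mem ∧ FOComprehensionP isClass mem ∧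
    GlobalWellOrder isClass (fun _ => False) mem

/-- Kelley–Morse set theory `KM`. -/
def KM : Prop :=
  ClassBase isClass (fun _ => False) mem ∧
    SOComprehension isClass mem L2 (strL2 isClass mem) ∧
    GlobalWellOrder isClass (fun _ => False) mem

/-- The class choice principle `CC` for pure class models. -/
def CC : Prop := ClassChoice isClass (fun _ => False) mem L2 (strL2 isClass mem)

end PureClassModels
/-! ### Second-order reflection in class models -/

section SORefl
variable {M : Type u} (isClass atom : M → Prop) (mem : M → M → Prop)

/-- The carrier of the full second-order structure `⟨v, ∈, P(v)⟩` determined by a set `v`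
of a class model: its objects are the members of `v` and its classes are the sets of the
model that are subsets of `v` (all subsets of `v`, computed in the model). -/
def RC (v : M) : Type u :=
  {x : M // mem x v} ⊕ {s : M // IsSetO isClass atom s ∧ ∀ z, mem z s → mem z v}

def rcIsClass (v : M) : RC isClass atom mem v → Prop :=
  fun z => match z with | .inl _ => False | .inr _ => True

def rcAtom (v : M) : RC isClass atom mem v → Prop :=
  fun z => match z with | .inl x => atom x.1 | .inr _ => False

def rcMem (v : M) : RC isClass atom mem v → RC isClass atom mem v → Prop :=
  fun a b => match a, b with
    | .inl x, .inl y => mem x.1 y.1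
    | .inl x, .inr s => mem x.1 s.1
    | _, _ => False

/-- The second-order reflection principle for urelement class models: every second-order
statement `φ(X⃗)` (a formula of the one-sorted language of class theory with urelements)
true in the model of class parameters `X⃗` is true in `⟨v, ∈, P(v)⟩` of the cut-down
parameters `X⃗ ∩ v`, for some transitive set `v`. -/
def SOReflectionU : Prop :=
  ∀ (k : ℕ) (φ : L2U.Formula (Fin k)) (Xs : Fin k → M), (∀ i, isClass (Xs i)) →
    RlzF (strL2U isClass atom mem) φ Xs →
    ∃ v, IsSetO isClass atom v ∧ TransitiveS mem v ∧
      ∃ Xv : Fin k → RC isClass atom mem v,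
        (∀ i, ∃ s hs, Xv i = Sum.inr ⟨s, hs⟩ ∧ ∀ z, mem z s ↔ (mem z v ∧ mem z (Xs i))) ∧
        RlzF (strL2U (rcIsClass isClass atom mem v) (rcAtom isClass atom mem v)
          (rcMem isClass atom mem v)) φ Xv

/-- The second-order reflection principle for pure class models. -/
def SOReflection : Prop :=
  ∀ (k : ℕ) (φ : L2.Formula (Fin k)) (Xs : Fin k → M), (∀ i, isClass (Xs i)) →
    RlzF (strL2 isClass mem) φ Xs →
    ∃ v, IsSetO isClass atom v ∧ TransitiveS mem v ∧
      ∃ Xv : Fin k → RC isClass atom mem v,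
        (∀ i, ∃ s hs, Xv i = Sum.inr ⟨s, hs⟩ ∧ ∀ z, mem z s ↔ (mem z v ∧ mem z (Xs i))) ∧
        RlzF (strL2 (rcIsClass isClass atom mem v) (rcMem isClass atom mem v)) φ Xv

/-- The induced structure on the members of a set `v`, in the language of set theory
with the atom predicate and `n` unary predicates for (restricted) class parameters. -/
def strMemSubU (n : ℕ) (v : M) (Cs : Fin n → M) : (LPU n).Structure {x : M // mem x v} :=
  strLPU n (fun x => atom x.1) (fun i x => mem x.1 (Cs i)) (fun x y => mem x.1 y.1)

/-- The `Π¹₁` reflection principle for urelement class models: every true statement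
`∀ C₁ ⋯ ∀ C_j ψ(C⃗, P⃗)`, with `ψ` first-order in the language `{∈, 𝔸}` with predicates
for the quantified classes `C⃗` and class parameters `P⃗`, reflects to some transitive
set `v`, where the quantified classes then range over the subsets of `v` in the model
and the parameters are restricted to `v`. -/
def Pi11ReflectionU : Prop :=
  ∀ (j k : ℕ) (ψ : (LPU (j + k)).Formula Empty) (Ps : Fin k → M), (∀ i, isClass (Ps i)) →
    (∀ Cs : Fin j → M, (∀ i, isClass (Cs i)) →
      RlzE (strObjU isClass atom mem (j + k) (Fin.append Cs Ps)) ψ) →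
    ∃ v, IsSetO isClass atom v ∧ TransitiveS mem v ∧
      ∀ Cs : Fin j → M, (∀ i, IsSetO isClass atom (Cs i) ∧ SubsetS mem (Cs i) v) →
        RlzE (strMemSubU atom mem (j + k) v (Fin.append Cs Ps)) ψ

end SORefl

/-! ### Rank levels and `Π¹ₙ`-indescribability inside a class model -/

section Indesc
variable {M : Type u} (isSet : M → Prop) (mem : M → M → Prop)

/-- `F` is the cumulative-hierarchy function `β ↦ V_β` for `β ≤ lam`: `F(∅) = ∅`,
`F(β + 1) = P(F(β))`, and unions at limits. -/
def IsVSeq (F lam : M) : Prop :=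
  isSet F ∧
    (∀ p, mem p F → ∃ β y, (mem β lam ∨ β = lam) ∧ IsOPair isSet mem p β y) ∧
    (∀ β, (mem β lam ∨ β = lam) → ∃ y, PairIn isSet mem F β y) ∧
    (∀ β y y', PairIn isSet mem F β y → PairIn isSet mem F β y' → y = y') ∧
    (∀ β y, PairIn isSet mem F β y → (∀ z, ¬ mem z β) → ∀ z, ¬ mem z y) ∧
    (∀ β β' y y', PairIn isSet mem F β y → PairIn isSet mem F β' y' →
      IsSuccOrd mem β' β → PowersetOf isSet mem y' y) ∧
    (∀ β y, PairIn isSet mem F β y → IsLimitOrd isSet mem β →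
      ∀ z, mem z y ↔ ∃ γ y', mem γ β ∧ PairIn isSet mem F γ y' ∧ mem z y')

/-- `v` is the rank level `V_α` of the cumulative hierarchy. -/
def IsRankLevel (α v : M) : Prop :=
  IsOrdinal isSet mem α ∧ ∃ F, IsVSeq isSet mem F α ∧ PairIn isSet mem F α v

end Indesc

section Indesc2
variable {M : Type u} (isClass : M → Prop) (mem : M → M → Prop)

/-- Satisfaction over the members of `v` of a first-order formula in the language with
`m` unary predicates, interpreted by the list `l` of sets (via membership). -/
def FOSatList (v : M) (m : ℕ) (ψ : (LP m).Formula Empty) (l : List M) : Prop :=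
  RlzE (strLP m (fun i (x : {x : M // mem x v}) => ∃ C, l[(i : ℕ)]? = some C ∧ mem x.1 C)
    (fun x y => mem x.1 y.1)) ψ

/-- Alternating blocks of second-order quantifiers over the model's subsets of `v`:
`bs` lists the block sizes, starting with a universal block when `univ = true`. -/
def AltSat (atom : M → Prop) (v : M) : List ℕ → Bool → List M → (List M → Prop) → Prop
  | [], _, acc, P => P acc
  | b :: rest, true, acc, P =>
      ∀ Cs : Fin b → M, (∀ i, IsSetO isClass atom (Cs i) ∧ SubsetS mem (Cs i) v) →
        AltSat atom v rest false (acc ++ List.ofFn Cs) P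
  | b :: rest, false, acc, P =>
      ∃ Cs : Fin b → M, (∀ i, IsSetO isClass atom (Cs i) ∧ SubsetS mem (Cs i) v) ∧
        AltSat atom v rest true (acc ++ List.ofFn Cs) P

/-- `κ` is `Π¹ₙ`-indescribable (inside a pure class model): every `Π¹ₙ` statement, with
second-order quantifier blocks `bs` (`n` alternations starting universal) and subset
parameters `Y⃗ ⊆ V_κ`, true in `⟨V_κ, ∈, Y⃗⟩` is true in `⟨V_γ, ∈, Y⃗ ∩ V_γ⟩` for some
`γ < κ`. -/
def PiIndescribable (atom : M → Prop) (n : ℕ) (κ : M) : Prop :=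
  IsOrdinal (IsSetO isClass atom) mem κ ∧
  ∀ vκ, IsRankLevel (IsSetO isClass atom) mem κ vκ →
  ∀ (bs : List ℕ), bs.length = n →
  ∀ (Y : List M), (∀ C ∈ Y, IsSetO isClass atom C ∧ SubsetS mem C vκ) →
  ∀ ψ : (LP (Y.length + bs.sum)).Formula Empty,
    AltSat isClass mem atom vκ bs true []
      (fun l => FOSatList mem vκ (Y.length + bs.sum) ψ (Y ++ l)) →
    ∃ γ vγ, mem γ κ ∧ IsRankLevel (IsSetO isClass atom) mem γ vγ ∧
      AltSat isClass mem atom vγ bs true []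
        (fun l => FOSatList mem vγ (Y.length + bs.sum) ψ (Y ++ l))

/-- `C` is a closed unbounded class of ordinals. -/
def ClubClass (atom : M → Prop) (C : M) : Prop :=
  isClass C ∧ (∀ x, mem x C → IsOrdinal (IsSetO isClass atom) mem x) ∧
    (∀ α, IsOrdinal (IsSetO isClass atom) mem α → ∃ γ, mem γ C ∧ mem α γ) ∧
    ∀ lam, IsLimitOrd (IsSetO isClass atom) mem lam →
      (∀ β, mem β lam → ∃ γ, mem γ C ∧ mem γ lam ∧ (mem β γ ∨ β = γ)) → mem lam C

end Indesc2
/-! ### Class cardinality comparisons, the abundant atom axiom -/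

section ClassCard
variable {M : Type u} (isClass atom : M → Prop) (mem : M → M → Prop)

/-- The class `F` is (the graph of) an injective function from `{x | P x}` into `{y | Q y}`. -/
def ClassInjPred (F : M) (P Q : M → Prop) : Prop :=
  isClass F ∧
    (∀ p, mem p F → ∃ x y, P x ∧ Q y ∧ IsOPair (IsSetO isClass atom) mem p x y) ∧
    (∀ x, P x → ∃ y, Q y ∧ PairIn (IsSetO isClass atom) mem F x y) ∧
    (∀ x y y', PairIn (IsSetO isClass atom) mem F x y →
      PairIn (IsSetO isClass atom) mem F x y' → y = y') ∧
    (∀ x x' y, PairIn (IsSetO isClass atom) mem F x y →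
      PairIn (IsSetO isClass atom) mem F x' y → x = x')

/-- The class `F` is a bijection between `{x | P x}` and `{y | Q y}`. -/
def ClassBijPred (F : M) (P Q : M → Prop) : Prop :=
  ClassInjPred isClass atom mem F P Q ∧
    ∀ y, Q y → ∃ x, P x ∧ PairIn (IsSetO isClass atom) mem F x y

/-- `{x | P x}` is strictly smaller in equinumerosity than `{y | Q y}`: it injects into it
but admits no class bijection with it. -/
def PredSmaller (P Q : M → Prop) : Prop :=
  (∃ F, ClassInjPred isClass atom mem F P Q) ∧ ¬ ∃ F, ClassBijPred isClass atom mem F P Q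

/-- A class is small if it is strictly smaller in equinumerosity than the class of all atoms. -/
def SmallClass (C : M) : Prop :=
  isClass C ∧ PredSmaller isClass atom mem (fun x => mem x C) atom

/-- The atom-smallness of a class given as a predicate. -/
def PredSmall (P : M → Prop) : Prop := PredSmaller isClass atom mem P atom

/-- The class of urelements is strictly larger than `Ord`. -/
def AtomsMoreThanOrd : Prop :=
  PredSmaller isClass atom mem (IsOrdinal (IsSetO isClass atom) mem) atom

/-- There are `Ord` many atoms: a class bijection between the ordinals and the atoms. -/
def OrdManyAtoms : Prop :=
  ∃ F, ClassBijPred isClass atom mem F (IsOrdinal (IsSetO isClass atom) mem) atom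

/-- The class of atoms is not injectable into the class of ordinals
("more than `Ord` many urelements"). -/
def AtomsNotInjOrd : Prop :=
  ¬ ∃ F, ClassInjPred isClass atom mem F atom (IsOrdinal (IsSetO isClass atom) mem)

/-- The abundant atom axiom: (1) there are more than `Ord` many atoms; (2) every small
class of urelements admits a small power class; (3) every small-indexed class of small
classes (of atoms) is small. -/
def AbundantAtomAxiom : Prop :=
  AtomsMoreThanOrd isClass atom mem ∧
  (∀ B, isClass B → (∀ a, mem a B → atom a) → SmallClass isClass atom mem B →
    ∃ I D, SmallClass isClass atom mem I ∧ isClass D ∧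
      (∀ p, mem p D → ∃ i b, mem i I ∧ mem b B ∧ IsOPair (IsSetO isClass atom) mem p i b) ∧
      ∀ X, isClass X → (∀ x, mem x X → mem x B) →
        ∃ i, mem i I ∧ ∀ b, mem b B →
          (mem b X ↔ PairIn (IsSetO isClass atom) mem D i b)) ∧
  (∀ I D, SmallClass isClass atom mem I → isClass D →
    (∀ p, mem p D → ∃ i a, mem i I ∧ atom a ∧ IsOPair (IsSetO isClass atom) mem p i a) →
    (∀ i, mem i I → PredSmall isClass atom mem
      (fun a => PairIn (IsSetO isClass atom) mem D i a)) →
    SmallClass isClass atom mem D)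

end ClassCard

/-! ### The hereditary model `⟨H_κ(A), ∈, ℋ⟩` of a class model -/

section Hered
variable {M : Type u} (isClass atom : M → Prop) (mem : M → M → Prop)

/-- `x` belongs to `H_κ(A)`: it is an atom or a member of a transitive set of size
less than `κ`. -/
def InHk (κ x : M) : Prop :=
  atom x ∨ ∃ t, IsSetO isClass atom t ∧ TransitiveS mem t ∧ mem x t ∧
    SizeLt (IsSetO isClass atom) mem t κ

/-- The carrier of the hereditary model: its objects are the members of `H_κ(A)` and its
classes are the classes of the ambient model contained in `H_κ(A)`. -/
def HCar (κ : M) : Type u :=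
  {x : M // IsObj isClass x ∧ InHk isClass atom mem κ x} ⊕
    {X : M // isClass X ∧ ∀ z, mem z X → InHk isClass atom mem κ z}

def hIsClass (κ : M) : HCar isClass atom mem κ → Prop :=
  fun z => match z with | .inl _ => False | .inr _ => True

def hAtom (κ : M) : HCar isClass atom mem κ → Prop :=
  fun z => match z with | .inl x => atom x.1 | .inr _ => False

def hMem (κ : M) : HCar isClass atom mem κ → HCar isClass atom mem κ → Prop :=
  fun a b => match a, b with
    | .inl x, .inl y => mem x.1 y.1
    | .inl x, .inr Y => mem x.1 Y.1
    | _, _ => False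

end Hered

/-! ### Internal supercompactness notions -/

section InternalSC
variable {M : Type u} (isSet : M → Prop) (mem : M → M → Prop)

/-- `P` is the set `P_κ(lam)` of subsets of `lam` of size less than `κ`. -/
def IsPklSet (P κ lam : M) : Prop :=
  isSet P ∧ ∀ x, mem x P ↔ (isSet x ∧ SubsetS mem x lam ∧ SizeLt isSet mem x κ)

/-- `U` is a normal fine `κ`-complete ultrafilter on `P = P_κ(lam)`. -/
def IsNFUMeasure (U P κ lam : M) : Prop :=
  isSet U ∧ (∀ X, mem X U → isSet X ∧ SubsetS mem X P) ∧
    (∀ X, mem X U → ∃ s, mem s X) ∧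
    (∀ X, isSet X → SubsetS mem X P →
      (mem X U ∨ ∃ Xc, isSet Xc ∧ (∀ s, mem s Xc ↔ (mem s P ∧ ¬ mem s X)) ∧ mem Xc U)) ∧
    (∀ α h, mem α κ → IsFuncOn isSet mem h α →
      (∀ ξ y, PairIn isSet mem h ξ y → mem y U) →
      ∃ X, mem X U ∧ ∀ s, mem s X ↔
        (mem s P ∧ ∀ ξ y, mem ξ α → PairIn isSet mem h ξ y → mem s y)) ∧
    (∀ a, mem a lam → ∃ X, mem X U ∧ ∀ s, mem s X ↔ (mem s P ∧ mem a s)) ∧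
    (∀ f, IsFuncOn isSet mem f P →
      (∀ s y, PairIn isSet mem f s y → (∃ z, mem z s) → mem y s) →
      ∃ a X, mem a lam ∧ mem X U ∧ ∀ s y, mem s X → PairIn isSet mem f s y → y = a)

/-- `κ` is internally `lam`-supercompact: there is a normal fine `κ`-complete ultrafilter
on `P_κ(lam)`. -/
def InternalSCWith (κ lam : M) : Prop :=
  ∃ P U, IsPklSet isSet mem P κ lam ∧ IsNFUMeasure isSet mem U P κ lam

/-- `κ` is internally `<lam`-supercompact. -/
def InternalSCBelow (κ lam : M) : Prop :=
  ∀ γ, mem γ lam → (mem κ γ ∨ κ = γ) → InternalSCWith isSet mem κ γ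

/-- `κ` is internally supercompact: `lam`-supercompact for every ordinal `lam ≥ κ`. -/
def InternalSC (κ : M) : Prop :=
  ∀ lam, IsOrdinal isSet mem lam → (mem κ lam ∨ κ = lam) → InternalSCWith isSet mem κ lam

/-- `κ` is internally nearly `lam`-supercompact, via Schanker's filter characterization:
for any families of at most `lam` many subsets of `P_κ(lam)` and at most `lam` many
functions `P_κ(lam) → lam`, there is a `κ`-complete fine filter on `P_κ(lam)` measuring
every set in the first family and normal for the second. -/
def InternalNearlySC (κ lam : M) : Prop :=
  ∀ P, IsPklSet isSet mem P κ lam →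
  ∀ SS FF, isSet SS → (∀ X, mem X SS → isSet X ∧ SubsetS mem X P) →
    SizeLe isSet mem SS lam →
    isSet FF →
    (∀ f, mem f FF → IsFuncOn isSet mem f P ∧ ∀ s y, PairIn isSet mem f s y → mem y lam) →
    SizeLe isSet mem FF lam →
    ∃ Fl, isSet Fl ∧ (∀ X, mem X Fl → isSet X ∧ SubsetS mem X P) ∧ (∃ X, mem X Fl) ∧
      (∀ X, mem X Fl → ∃ s, mem s X) ∧
      (∀ X Y, mem X Fl → isSet Y → SubsetS mem Y P → SubsetS mem X Y → mem Y Fl) ∧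
      (∀ α h, mem α κ → IsFuncOn isSet mem h α →
        (∀ ξ y, PairIn isSet mem h ξ y → mem y Fl) →
        ∃ X, mem X Fl ∧ ∀ s, mem s X ↔
          (mem s P ∧ ∀ ξ y, mem ξ α → PairIn isSet mem h ξ y → mem s y)) ∧
      (∀ a, mem a lam → ∃ X, mem X Fl ∧ ∀ s, mem s X ↔ (mem s P ∧ mem a s)) ∧
      (∀ X, mem X SS → (mem X Fl ∨ ∃ Xc, isSet Xc ∧
        (∀ s, mem s Xc ↔ (mem s P ∧ ¬ mem s X)) ∧ mem Xc Fl)) ∧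
      (∀ f, mem f FF → (∀ s y, PairIn isSet mem f s y → (∃ z, mem z s) → mem y s) →
        ∃ a X, mem a lam ∧ mem X Fl ∧ ∀ s y, mem s X → PairIn isSet mem f s y → y = a)

end InternalSC
/-! ### Second-order sentences over arbitrary first-order structures -/

/-- A language of second-order relation variables: `ℕ`-many symbols of every arity. -/
def V2 : Language := ⟨fun _ => Empty, fun _ => ℕ⟩

/-- A second-order sentence over the language `L`, in prenex form: a prefix of
second-order quantifiers (`true` = universal, with an arity and a variable index)
followed by a first-order matrix over `L` expanded by the relation variables. -/
structure SOSentence (L : Language) where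
  prefixQ : List (Bool × ℕ × ℕ)
  matrix : (L.sum V2).Sentence

/-- A second-order sentence is `Π¹₁` if its second-order quantifiers are all universal. -/
def SOSentence.IsPi11 {L : Language} (φ : SOSentence L) : Prop :=
  ∀ q ∈ φ.prefixQ, q.1 = true

section SOSem
variable {L : Language} {α : Type u}

/-- An assignment of the second-order relation variables. -/
def SOAssign (α : Type u) : Type u := ∀ n : ℕ, ℕ → (Fin n → α) → Prop

/-- Updating a second-order assignment at arity `n`, index `j`. -/
def updA (A : SOAssign α) (n j : ℕ) (R : (Fin n → α) → Prop) : SOAssign α :=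
  fun m i =>
    if h : m = n then
      (if i = j then fun w => R (fun t => w (Fin.cast h.symm t)) else A m i)
    else A m i

/-- The expansion of an `L`-structure by a second-order assignment. -/
def sumStructure (S : L.Structure α) (A : SOAssign α) : (L.sum V2).Structure α where
  funMap {n} f v :=
    match f with
    | Sum.inl f => @Structure.funMap L α S n f v
    | Sum.inr e => Empty.elim e
  RelMap {n} r v :=
    match r with
    | Sum.inl r => @Structure.RelMap L α S n r v
    | Sum.inr j => A n j v

/-- Satisfaction of a prenex second-order prefix-and-matrix, where the second-order
quantifiers range over the relations admitted by `Adm`. -/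
def SOSat (S : L.Structure α) (Adm : ∀ n : ℕ, ((Fin n → α) → Prop) → Prop) :
    List (Bool × ℕ × ℕ) → SOAssign α → (L.sum V2).Sentence → Prop
  | [], A, φ => RlzE (sumStructure S A) φ
  | (true, n, j) :: rest, A, φ => ∀ R, Adm n R → SOSat S Adm rest (updA A n j R) φ
  | (false, n, j) :: rest, A, φ => ∃ R, Adm n R ∧ SOSat S Adm rest (updA A n j R) φ

/-- Truth of a second-order sentence in the `L`-structure `S`, with second-order
quantifiers ranging over the relations admitted by `Adm`. -/
def SOTrueAdm (S : L.Structure α) (Adm : ∀ n : ℕ, ((Fin n → α) → Prop) → Prop)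
    (φ : SOSentence L) : Prop :=
  ∀ A : SOAssign α, SOSat S Adm φ.prefixQ A φ.matrix

/-- Truth of a second-order sentence with full second-order semantics. -/
def SOTrue (S : L.Structure α) (φ : SOSentence L) : Prop :=
  SOTrueAdm S (fun _ _ => True) φ

end SOSem

/-! ### Second-order reflective cardinals (in the ambient set theory of types) -/

section TypeWorld

/-- `P_κ lam`: the subsets of `lam` of size less than `κ`. -/
def Pkl (κ lam : Cardinal.{u}) : Type u := {s : Set lam.ord.ToType // #s < κ}

/-- `U` is a normal fine `κ`-complete ultrafilter on `P_κ lam`. -/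
def IsNFUltrafilter (κ lam : Cardinal.{u}) (U : Ultrafilter (Pkl κ lam)) : Prop :=
  (∀ (ι : Type u) (g : ι → Set (Pkl κ lam)), #ι < κ → (∀ i, g i ∈ U) → (⋂ i, g i) ∈ U) ∧
    (∀ a : lam.ord.ToType, {s : Pkl κ lam | a ∈ s.1} ∈ U) ∧
    (∀ f : Pkl κ lam → lam.ord.ToType, (∀ s : Pkl κ lam, s.1.Nonempty → f s ∈ s.1) →
      ∃ a, {s : Pkl κ lam | f s = a} ∈ U)

/-- `κ` is `lam`-supercompact: there is a normal fine `κ`-complete ultrafilter on `P_κ lam`. -/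
def IsSupercompactWith (κ lam : Cardinal.{u}) : Prop :=
  ∃ U : Ultrafilter (Pkl κ lam), IsNFUltrafilter κ lam U

/-- `κ` is supercompact: `lam`-supercompact for every `lam ≥ κ`. -/
def IsSupercompact (κ : Cardinal.{u}) : Prop :=
  ∀ lam : Cardinal.{u}, κ ≤ lam → IsSupercompactWith κ lam

/-- `κ` is nearly `lam`-supercompact (Schanker), via the normal filter characterization:
for every family of at most `lam` many subsets of `P_κ lam` and at most `lam` many
functions `P_κ lam → lam`, there is a proper `κ`-complete fine filter measuring every set
in the family and normal for the given functions. -/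
def IsNearlySupercompact (κ lam : Cardinal.{u}) : Prop :=
  ∀ (SS : Set (Set (Pkl κ lam))) (FF : Set (Pkl κ lam → lam.ord.ToType)),
    Cardinal.mk SS ≤ lam → #FF ≤ lam →
    ∃ Fl : Filter (Pkl κ lam), Fl.NeBot ∧
      (∀ (ι : Type u) (g : ι → Set (Pkl κ lam)), #ι < κ → (∀ i, g i ∈ Fl) →
        (⋂ i, g i) ∈ Fl) ∧
      (∀ a : lam.ord.ToType, {s : Pkl κ lam | a ∈ s.1} ∈ Fl) ∧
      (∀ X ∈ SS, X ∈ Fl ∨ Xᶜ ∈ Fl) ∧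
      (∀ f ∈ FF, (∀ s : Pkl κ lam, s.1.Nonempty → f s ∈ s.1) →
        ∃ a, {s : Pkl κ lam | f s = a} ∈ Fl)

/-- `κ` is a measurable cardinal: uncountable, with a nonprincipal `κ`-complete
ultrafilter on `κ`. -/
def IsMeasurableCard (κ : Cardinal.{u}) : Prop :=
  Cardinal.aleph0 < κ ∧ ∃ U : Ultrafilter κ.ord.ToType,
    (∀ x, ¬ ({x} : Set κ.ord.ToType) ∈ U) ∧
    ∀ (ι : Type u) (g : ι → Set κ.ord.ToType), #ι < κ → (∀ i, g i ∈ U) → (⋂ i, g i) ∈ U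

/-- The substructure of an `L`-structure on a subset `m` closed under the functions. -/
def subStr {L : Language} {α : Type u} (S : L.Structure α) (m : Set α)
    (hc : ∀ {n : ℕ} (f : L.Functions n) (v : Fin n → α), (∀ i, v i ∈ m) →
      @Structure.funMap L α S n f v ∈ m) : L.Structure m where
  funMap {n} f v := ⟨@Structure.funMap L α S n f (fun i => (v i).1), hc f _ (fun i => (v i).2)⟩
  RelMap {n} R v := @Structure.RelMap L α S n R (fun i => (v i).1)

/-- `m` is (the domain of) a first-order elementary substructure of `⟨α, S⟩`. -/
def IsElemSub {L : Language} {α : Type u} (S : L.Structure α) (m : Set α)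
    (hc : ∀ {n : ℕ} (f : L.Functions n) (v : Fin n → α), (∀ i, v i ∈ m) →
      @Structure.funMap L α S n f v ∈ m) : Prop :=
  ∀ (k : ℕ) (ψ : L.Formula (Fin k)) (as : Fin k → m),
    RlzF (subStr S m hc) ψ as ↔ RlzF S ψ (fun i => (as i).1)

/-- The general reflectivity notion: every second-order sentence `φ` satisfying `P`,
true in a structure `M` in a language of size less than `κ`, whose domain contains `κ`
and whose size satisfies `sz`, is true in a first-order elementary substructure `m ≺ M`
of size less than `κ` with `m ∩ κ ∈ κ`. -/
def ReflectiveGen (κ : Cardinal.{u}) (sz : Cardinal.{u} → Prop)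
    (P : (L : FirstOrder.Language.{u, u}) → SOSentence L → Prop) : Prop :=
  ∀ (L : FirstOrder.Language.{u, u}) (α : Type u) (S : L.Structure α) (o : κ.ord.ToType ↪ α),
    L.card < κ → sz (#α) →
    ∀ φ : SOSentence L, P L φ → SOTrue S φ →
      ∃ (m : Set α) (hc : ∀ {n : ℕ} (f : L.Functions n) (v : Fin n → α),
          (∀ i, v i ∈ m) → @Structure.funMap L α S n f v ∈ m),
        Cardinal.mk m < κ ∧ IsElemSub S m hc ∧
        (∃ g : κ.ord.ToType, ∀ b, (o b ∈ m ↔ b < g)) ∧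
        SOTrue (subStr S m hc) φ

/-- `κ` is second-order `lam`-reflective. -/
def SOLamReflective (κ lam : Cardinal.{u}) : Prop :=
  ReflectiveGen κ (fun c => c = lam) (fun _ _ => True)

/-- `κ` is `lam`-reflective for `Π¹₁` assertions. -/
def Pi11LamReflective (κ lam : Cardinal.{u}) : Prop :=
  ReflectiveGen κ (fun c => c = lam) (fun _ φ => φ.IsPi11)

/-- `κ` is second-order reflective (for structures of any size). -/
def SOReflective (κ : Cardinal.{u}) : Prop :=
  ReflectiveGen κ (fun _ => True) (fun _ _ => True)

/-- `κ` is reflective for `Π¹₁` assertions. -/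
def Pi11Reflective (κ : Cardinal.{u}) : Prop :=
  ReflectiveGen κ (fun _ => True) (fun _ φ => φ.IsPi11)

end TypeWorld
/-! ### Internal second-order reflectivity of a cardinal inside a model -/

section InternalRefl
variable {M : Type u} (isSet : M → Prop) (mem : M → M → Prop)

/-- The external (relational) language whose relation symbols are the members of the
internal index set `ι`, with arities given by `ar`. -/
def LofInternal (ι : M) (ar : {i : M // mem i ι} → ℕ) : Language :=
  ⟨fun _ => Empty, fun n => {i : {i : M // mem i ι} // ar i = n}⟩

instance (ι : M) (ar : {i : M // mem i ι} → ℕ) : (LofInternal mem ι ar).IsRelational :=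
  fun _ => inferInstanceAs (IsEmpty Empty)

/-- The structure on the members of the domain `d` interpreting each relation symbol
`i` by the tuples (coded as iterated pairs) appearing in the interpretation `r` paired
with `i`. -/
def strInternal (ι : M) (ar : {i : M // mem i ι} → ℕ) (d r : M) :
    (LofInternal mem ι ar).Structure {x : M // mem x d} where
  funMap f _ := Empty.elim f
  RelMap {n} R v :=
    ∃ t, CodesTuple isSet mem n t (fun i => (v i).1) ∧ PairIn isSet mem r R.1.1 t

/-- The relations on the members of `d` coded by an entity satisfying `Good`
(e.g. by a set, or by a class): the admissible relations for internal second-order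
quantification. -/
def CodedRel (Good : M → Prop) (d : M) (n : ℕ) (R : (Fin n → {x : M // mem x d}) → Prop) :
    Prop :=
  ∃ r, Good r ∧ ∀ v, R v ↔ ∃ t, CodesTuple isSet mem n t (fun i => (v i).1) ∧ mem t r

/-- First-order elementarity of the (internal) subset `m ⊆ d` in the structure
determined by `(d, r)`. -/
def InternalElemSub (ι : M) (ar : {i : M // mem i ι} → ℕ) (d r m : M) : Prop :=
  ∀ (k : ℕ) (ψ : (LofInternal mem ι ar).Formula (Fin k)) (as : Fin k → {x : M // mem x m})
    (h : ∀ i, mem (as i).1 d),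
    RlzF (strInternal isSet mem ι ar m r) ψ as ↔
      RlzF (strInternal isSet mem ι ar d r) ψ (fun i => ⟨(as i).1, h i⟩)

/-- `m ∩ κ` is an ordinal below `κ`. -/
def CutsKappa (κ m : M) : Prop :=
  ∃ γ, mem γ κ ∧ ∀ x, (mem x m ∧ mem x κ) ↔ mem x γ

/-- Internal reflectivity of `κ` for structures with a set domain: every second-order
sentence (satisfying `P`) in an internal language of size less than `κ`, true in an
internal structure whose domain is a set containing `κ` and satisfying the size
constraint `sz`, with second-order quantifiers ranging over the set-coded relations,
is true in a first-order elementary substructure `m` of size less than `κ` with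
`m ∩ κ ∈ κ`. -/
def InternallyReflective (κ : M) (sz : M → Prop)
    (P : ∀ (ι : M) (ar : {i : M // mem i ι} → ℕ), SOSentence (LofInternal mem ι ar) → Prop) :
    Prop :=
  ∀ (ι : M), isSet ι → SizeLt isSet mem ι κ →
  ∀ (ar : {i : M // mem i ι} → ℕ) (d r : M),
    isSet d → (∀ β, mem β κ → mem β d) → sz d → isSet r →
    ∀ φ : SOSentence (LofInternal mem ι ar), P ι ar φ →
      SOTrueAdm (strInternal isSet mem ι ar d r) (CodedRel isSet mem isSet d) φ →
      ∃ m, isSet m ∧ SubsetS mem m d ∧ SizeLt isSet mem m κ ∧ CutsKappa mem κ m ∧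
        InternalElemSub isSet mem ι ar d r m ∧
        SOTrueAdm (strInternal isSet mem ι ar m r) (CodedRel isSet mem isSet m) φ

/-- `κ` is (internally) second-order `lam`-reflective: reflectivity for structures of
size `lam`. -/
def InternallyLamReflective (κ lam : M) : Prop :=
  InternallyReflective isSet mem κ (fun d => EquinumerousI isSet mem d lam)
    (fun _ _ _ => True)

/-- `κ` is (internally) `lam`-reflective for `Π¹₁` assertions. -/
def InternallyLamReflectivePi11 (κ lam : M) : Prop :=
  InternallyReflective isSet mem κ (fun d => EquinumerousI isSet mem d lam)
    (fun _ _ φ => φ.IsPi11)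

end InternalRefl

section InternalReflClass
variable {M : Type u} (isClass atom : M → Prop) (mem : M → M → Prop)

/-- Internal second-order `Ord`-reflectivity of `κ` inside a class model: every
second-order sentence (satisfying `P`) in an internal language of size less than `κ`,
true in a class structure whose domain is a class `X ⊇ κ`, with interpretation coded by
a class and second-order quantifiers ranging over the class-coded relations, is true in
a first-order elementary set-sized substructure `m` of size less than `κ` with
`m ∩ κ ∈ κ`, with second-order quantifiers over the set-coded relations. -/
def OrdReflectiveGen (κ : M)
    (P : ∀ (ι : M) (ar : {i : M // mem i ι} → ℕ), SOSentence (LofInternal mem ι ar) → Prop) :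
    Prop :=
  ∀ (ι : M), IsSetO isClass atom ι → SizeLt (IsSetO isClass atom) mem ι κ →
  ∀ (ar : {i : M // mem i ι} → ℕ) (X r : M),
    isClass X → (∀ β, mem β κ → mem β X) → isClass r →
    ∀ φ : SOSentence (LofInternal mem ι ar), P ι ar φ →
      SOTrueAdm (strInternal (IsSetO isClass atom) mem ι ar X r)
        (CodedRel (IsSetO isClass atom) mem isClass X) φ →
      ∃ m, IsSetO isClass atom m ∧ SubsetS mem m X ∧
        SizeLt (IsSetO isClass atom) mem m κ ∧ CutsKappa mem κ m ∧
        InternalElemSub (IsSetO isClass atom) mem ι ar X r m ∧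
        SOTrueAdm (strInternal (IsSetO isClass atom) mem ι ar m r)
          (CodedRel (IsSetO isClass atom) mem (IsSetO isClass atom) m) φ

/-- `κ` is second-order `Ord`-reflective (inside a class model). -/
def OrdReflective (κ : M) : Prop :=
  OrdReflectiveGen isClass atom mem κ (fun _ _ _ => True)

/-- `κ` is `Ord`-reflective for `Π¹₁` assertions (inside a class model). -/
def OrdReflectivePi11 (κ : M) : Prop :=
  OrdReflectiveGen isClass atom mem κ (fun _ _ φ => φ.IsPi11)

end InternalReflClass
/-! ### Interpretations and bi-interpretations -/

section Interp

/-- An interpretation of the (relational) language `L'` in the (relational) language `L`: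
a parameter type `π`, a dimension type `α`, and `L`-formulas defining the domain of
`α`-tuples, an equivalence on them, and the interpretation of each `L'`-relation. -/
structure Interp (L L' : FirstOrder.Language.{0, 0}) : Type 1 where
  π : Type
  α : Type
  dom : L.Formula (π ⊕ α)
  eqv : L.Formula (π ⊕ (α ⊕ α))
  rel : ∀ ⦃n : ℕ⦄, L'.Relations n → L.Formula (π ⊕ (Fin n × α))

variable {L L' : FirstOrder.Language.{0, 0}}

/-- The tuples satisfying the domain formula of an interpretation. -/
def Interp.Dom (I : Interp L L') {M : Type} (S : L.Structure M) (pv : I.π → M) : Type :=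
  {v : I.α → M // RlzF S I.dom (Sum.elim pv v)}

/-- The interpreted equivalence on domain tuples. -/
def Interp.eqvRel (I : Interp L L') {M : Type} (S : L.Structure M) (pv : I.π → M) :
    I.Dom S pv → I.Dom S pv → Prop :=
  fun v w => RlzF S I.eqv (Sum.elim pv (Sum.elim v.1 w.1))

/-- The carrier of the interpreted structure: domain tuples up to interpreted equivalence. -/
def Interp.Carrier (I : Interp L L') {M : Type} (S : L.Structure M) (pv : I.π → M) : Type :=
  Quot (I.eqvRel S pv)

/-- The class of a domain tuple in the interpreted structure. -/
def Interp.cls (I : Interp L L') {M : Type} (S : L.Structure M) (pv : I.π → M)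
    (v : I.Dom S pv) : I.Carrier S pv :=
  Quot.mk _ v

/-- The interpreted `L'`-structure. -/
def Interp.str [L'.IsRelational] (I : Interp L L') {M : Type} (S : L.Structure M)
    (pv : I.π → M) : L'.Structure (I.Carrier S pv) where
  funMap f := isEmptyElim f
  RelMap {n} R q :=
    ∃ v : Fin n → I.Dom S pv, (∀ i, I.cls S pv (v i) = q i) ∧
      RlzF S (I.rel R) (Sum.elim pv (fun p : Fin n × I.α => (v p.1).1 p.2))

/-- `raw : J.α × I.α → M` represents the element `z` of the twice-interpreted structure
`J(I(M))`. -/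
def Reps2 [L'.IsRelational] (I : Interp L L') (J : Interp L' L) {M : Type}
    (S : L.Structure M) (pv : I.π → M) (qv : J.π → I.Carrier S pv)
    (raw : J.α × I.α → M) (z : J.Carrier (I.str S pv) qv) : Prop :=
  ∃ (h : ∀ b : J.α, RlzF S I.dom (Sum.elim pv (fun a => raw (b, a))))
    (hd : RlzF (I.str S pv) J.dom
      (Sum.elim qv (fun b => I.cls S pv ⟨fun a => raw (b, a), h b⟩))),
    z = J.cls (I.str S pv) qv ⟨fun b => I.cls S pv ⟨fun a => raw (b, a), h b⟩, hd⟩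

/-- An isomorphism between two structures for a relational language. -/
structure RelEquiv {A B : Type} {L'' : FirstOrder.Language.{0, 0}} (SA : L''.Structure A) (SB : L''.Structure B) where
  toEquiv : A ≃ B
  rel_iff : ∀ {n : ℕ} (R : L''.Relations n) (v : Fin n → A),
    (@Structure.RelMap L'' B SB n R (fun i => toEquiv (v i)) ↔ @Structure.RelMap L'' A SA n R v)

/-- A class of structures in the language `L` (a theory, presented semantically). -/
def StructClass (L : FirstOrder.Language.{0, 0}) : Type 1 := ∀ (M : Type) (_ : L.Structure M), Prop

/-- A mutual interpretation of the theory `CB` with the theory `CA`: uniform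
interpretations carrying each model of the one theory to a model of the other,
allowing parameters. -/
structure TheoryMutInterp {LA LB : FirstOrder.Language.{0, 0}} [LA.IsRelational] [LB.IsRelational]
    (CA : StructClass LA) (CB : StructClass LB) : Type 1 where
  I : Interp LA LB
  J : Interp LB LA
  interpA : ∀ (M : Type) (S : LA.Structure M), CA M S →
    ∃ pv : I.π → M, CB (I.Carrier S pv) (I.str S pv)
  interpB : ∀ (N : Type) (T : LB.Structure N), CB N T →
    ∃ qv : J.π → N, CA (J.Carrier T qv) (J.str T qv)

/-- The condition that a model `M` of the first theory definably sees the isomorphism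
with its copy inside the interpreted model: there is an isomorphism of `M` with
`J(I(M))` whose graph is uniformly definable (from parameters) by the formula `γ`. -/
def SeesIso {LA LB : FirstOrder.Language.{0, 0}} [LA.IsRelational] [LB.IsRelational]
    (I : Interp LA LB) (J : Interp LB LA) (γp : Type)
    (γ : LA.Formula (γp ⊕ (Unit ⊕ (J.α × I.α)))) (M : Type) (S : LA.Structure M) : Prop :=
  ∃ (pv : I.π → M) (qv : J.π → I.Carrier S pv) (gp : γp → M)
    (c : RelEquiv S (J.str (I.str S pv) qv)),
    ∀ (x : M) (raw : J.α × I.α → M),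
      RlzF S γ (Sum.elim gp (Sum.elim (fun _ => x) raw)) ↔
        Reps2 I J S pv qv raw (c.toEquiv x)

/-- A bi-interpretation of the theories `CA` and `CB` (allowing parameters): mutual
uniform interpretations such that every model of either theory definably sees the
isomorphism of itself with its copy inside the composite interpreted model. -/
structure TheoryBiInterp {LA LB : FirstOrder.Language.{0, 0}} [LA.IsRelational] [LB.IsRelational]
    (CA : StructClass LA) (CB : StructClass LB) extends TheoryMutInterp CA CB : Type 1 where
  γp : Type
  γ : LA.Formula (γp ⊕ (Unit ⊕ (J.α × I.α)))
  δp : Type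
  δ : LB.Formula (δp ⊕ (Unit ⊕ (I.α × J.α)))
  seesA : ∀ (M : Type) (S : LA.Structure M), CA M S → SeesIso I J γp γ M S
  seesB : ∀ (N : Type) (T : LB.Structure N), CB N T → SeesIso J I δp δ N T

/-- A bi-interpretation is parameter-free when all its parameter types are empty. -/
def TheoryBiInterp.ParamFree {LA LB : FirstOrder.Language.{0, 0}} [LA.IsRelational] [LB.IsRelational]
    {CA : StructClass LA} {CB : StructClass LB} (B : TheoryBiInterp CA CB) : Prop :=
  IsEmpty B.I.π ∧ IsEmpty B.J.π ∧ IsEmpty B.γp ∧ IsEmpty B.δp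

/-- A semi-bi-interpretation: a mutual interpretation in which the models of the first
theory definably see the isomorphism with their copies. -/
structure TheorySemiBiInterp {LA LB : FirstOrder.Language.{0, 0}} [LA.IsRelational] [LB.IsRelational]
    (CA : StructClass LA) (CB : StructClass LB) extends TheoryMutInterp CA CB : Type 1 where
  γp : Type
  γ : LA.Formula (γp ⊕ (Unit ⊕ (J.α × I.α)))
  seesA : ∀ (M : Type) (S : LA.Structure M), CA M S → SeesIso I J γp γ M S

/-- A mutual interpretation is parameter-free when its parameter types are empty. -/
def TheoryMutInterp.ParamFree {LA LB : FirstOrder.Language.{0, 0}} [LA.IsRelational] [LB.IsRelational]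
    {CA : StructClass LA} {CB : StructClass LB} (B : TheoryMutInterp CA CB) : Prop :=
  IsEmpty B.I.π ∧ IsEmpty B.J.π

/-- A bi-interpretation of two individual structures (allowing parameters):
interpretations each way, isomorphisms of each structure with its interpreted copy in
the other, such that each structure definably sees the isomorphism of itself with its
copy inside the composite. -/
structure StructBiInterp {LA LB : FirstOrder.Language.{0, 0}} [LA.IsRelational] [LB.IsRelational]
    {M N : Type} (S : LA.Structure M) (T : LB.Structure N) : Type 1 where
  I : Interp LA LB
  J : Interp LB LA
  pv : I.π → M
  qv : J.π → N
  e : RelEquiv (I.str S pv) T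
  f : RelEquiv (J.str T qv) S
  γp : Type
  γ : LA.Formula (γp ⊕ (Unit ⊕ (J.α × I.α)))
  δp : Type
  δ : LB.Formula (δp ⊕ (Unit ⊕ (I.α × J.α)))
  seesA : SeesIso I J γp γ M S
  seesB : SeesIso J I δp δ N T

end Interp
/-! ### Extracting the relations from structures in the concrete languages -/

section Extract
variable {M : Type}

def memLST (S : LST.Structure M) : M → M → Prop :=
  fun x y => @Structure.RelMap LST M S 2 (() : Unit) ![x, y]

def atomLU (S : LU.Structure M) : M → Prop :=
  fun x => @Structure.RelMap LU M S 1 (() : Unit) ![x]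

def memLU (S : LU.Structure M) : M → M → Prop :=
  fun x y => @Structure.RelMap LU M S 2 (() : Unit) ![x, y]

def memLUvec (S : LUvec.Structure M) : M → M → Prop :=
  fun x y => @Structure.RelMap LUvec M S 2 (false : Bool) ![x, y]

def avecLUvec (S : LUvec.Structure M) : M → M → Prop :=
  fun x y => @Structure.RelMap LUvec M S 2 (true : Bool) ![x, y]

def isClassL2 (S : L2.Structure M) : M → Prop :=
  fun x => @Structure.RelMap L2 M S 1 (() : Unit) ![x]

def memL2 (S : L2.Structure M) : M → M → Prop :=
  fun x y => @Structure.RelMap L2 M S 2 (() : Unit) ![x, y]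

def isClassL2U (S : L2U.Structure M) : M → Prop :=
  fun x => @Structure.RelMap L2U M S 1 (false : Bool) ![x]

def atomL2U (S : L2U.Structure M) : M → Prop :=
  fun x => @Structure.RelMap L2U M S 1 (true : Bool) ![x]

def memL2U (S : L2U.Structure M) : M → M → Prop :=
  fun x y => @Structure.RelMap L2U M S 2 (() : Unit) ![x, y]

end Extract

/-! ### Auxiliary development for the urelement duplication theorem -/

section DupAux

variable {M : Type u} {atom : M → Prop} {mem : M → M → Prop}

/-- Uniform definability of an `m`-ary predicate on `M` by `LU`-formulas,
with arbitrary assignments of the argument slots to free/bound variables. -/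
def DfnA (atom : M → Prop) (mem : M → M → Prop) (m : ℕ) (P : (Fin m → M) → Prop) : Prop :=
  ∀ {α : Type} {n : ℕ} (ix : Fin m → α ⊕ Fin n),
    ∃ φ : LU.BoundedFormula α n,
      ∀ (p : α → M) (xs : Fin n → M),
        Rlz (strLU atom mem) φ p xs ↔ P (fun j => Sum.elim p xs (ix j))

theorem dfnA_mem (i j : Fin m) : DfnA atom mem m (fun v => mem (v i) (v j)) := by
  intro α n ix
  refine ⟨Relations.boundedFormula₂ (Unit.unit : LU.Relations 2)
    (Term.var (ix i)) (Term.var (ix j)), fun p xs => ?_⟩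
  letI := strLU atom mem
  erw [show Rlz (strLU atom mem) _ p xs =
    (Relations.boundedFormula₂ (Unit.unit : LU.Relations 2)
      (Term.var (ix i)) (Term.var (ix j))).Realize p xs from rfl,
    BoundedFormula.realize_rel₂]
  simp only [Term.realize_var]
  exact Iff.rfl

theorem dfnA_atom (i : Fin m) : DfnA atom mem m (fun v => atom (v i)) := by
  intro α n ix
  refine ⟨Relations.boundedFormula₁ (Unit.unit : LU.Relations 1) (Term.var (ix i)),
    fun p xs => ?_⟩
  letI := strLU atom mem
  erw [show Rlz (strLU atom mem) _ p xs =
    (Relations.boundedFormula₁ (Unit.unit : LU.Relations 1) (Term.var (ix i))).Realize p xs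
      from rfl,
    BoundedFormula.realize_rel₁]
  simp only [Term.realize_var]
  exact Iff.rfl

theorem dfnA_eq (i j : Fin m) : DfnA atom mem m (fun v => v i = v j) := by
  intro α n ix
  refine ⟨Term.bdEqual (Term.var (ix i)) (Term.var (ix j)), fun p xs => ?_⟩
  letI := strLU atom mem
  rw [show Rlz (strLU atom mem) _ p xs =
    (Term.bdEqual (Term.var (ix i)) (Term.var (ix j))).Realize p xs from rfl,
    BoundedFormula.realize_bdEqual]
  simp only [Term.realize_var]

theorem DfnA.and {m} {P Q : (Fin m → M) → Prop} (hP : DfnA atom mem m P)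
    (hQ : DfnA atom mem m Q) : DfnA atom mem m (fun v => P v ∧ Q v) := by
  intro α n ix
  obtain ⟨φ, hφ⟩ := hP ix; obtain ⟨ψ, hψ⟩ := hQ ix
  refine ⟨φ ⊓ ψ, fun p xs => ?_⟩
  letI := strLU atom mem
  rw [show Rlz (strLU atom mem) (φ ⊓ ψ) p xs = (φ ⊓ ψ).Realize p xs from rfl,
    BoundedFormula.realize_inf]
  exact and_congr (hφ p xs) (hψ p xs)

theorem DfnA.or {m} {P Q : (Fin m → M) → Prop} (hP : DfnA atom mem m P)
    (hQ : DfnA atom mem m Q) : DfnA atom mem m (fun v => P v ∨ Q v) := by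
  intro α n ix
  obtain ⟨φ, hφ⟩ := hP ix; obtain ⟨ψ, hψ⟩ := hQ ix
  refine ⟨φ ⊔ ψ, fun p xs => ?_⟩
  letI := strLU atom mem
  rw [show Rlz (strLU atom mem) (φ ⊔ ψ) p xs = (φ ⊔ ψ).Realize p xs from rfl,
    BoundedFormula.realize_sup]
  exact or_congr (hφ p xs) (hψ p xs)

theorem DfnA.not {m} {P : (Fin m → M) → Prop} (hP : DfnA atom mem m P) :
    DfnA atom mem m (fun v => ¬ P v) := by
  intro α n ix
  obtain ⟨φ, hφ⟩ := hP ix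
  refine ⟨φ.not, fun p xs => ?_⟩
  letI := strLU atom mem
  rw [show Rlz (strLU atom mem) φ.not p xs = (φ.not).Realize p xs from rfl,
    BoundedFormula.realize_not]
  exact not_congr (hφ p xs)

theorem DfnA.imp {m} {P Q : (Fin m → M) → Prop} (hP : DfnA atom mem m P)
    (hQ : DfnA atom mem m Q) : DfnA atom mem m (fun v => P v → Q v) := by
  intro α n ix
  obtain ⟨φ, hφ⟩ := hP ix; obtain ⟨ψ, hψ⟩ := hQ ix
  refine ⟨φ.imp ψ, fun p xs => ?_⟩
  letI := strLU atom mem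
  rw [show Rlz (strLU atom mem) (φ.imp ψ) p xs = (φ.imp ψ).Realize p xs from rfl,
    BoundedFormula.realize_imp]
  exact imp_congr (hφ p xs) (hψ p xs)

theorem DfnA.iff {m} {P Q : (Fin m → M) → Prop} (hP : DfnA atom mem m P)
    (hQ : DfnA atom mem m Q) : DfnA atom mem m (fun v => (P v ↔ Q v)) := by
  intro α n ix
  obtain ⟨φ, hφ⟩ := hP ix; obtain ⟨ψ, hψ⟩ := hQ ix
  refine ⟨φ.iff ψ, fun p xs => ?_⟩
  letI := strLU atom mem
  rw [show Rlz (strLU atom mem) (φ.iff ψ) p xs = (φ.iff ψ).Realize p xs from rfl,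
    BoundedFormula.realize_iff]
  exact iff_congr (hφ p xs) (hψ p xs)

theorem DfnA.congr {m} {P Q : (Fin m → M) → Prop} (hP : DfnA atom mem m P)
    (h : ∀ v, Q v ↔ P v) : DfnA atom mem m Q := by
  intro α n ix
  obtain ⟨φ, hφ⟩ := hP ix
  exact ⟨φ, fun p xs => (hφ p xs).trans (h _).symm⟩

private theorem snoc_elim_aux {α : Type} {n m : ℕ} (ix : Fin m → α ⊕ Fin n) (p : α → M)
    (xs : Fin n → M) (y : M) :
    (fun j => Sum.elim p (Fin.snoc xs y)
        ((Fin.snoc (fun j' => Sum.map id Fin.castSucc (ix j')) (Sum.inr (Fin.last n)) : Fin (m+1) → α ⊕ Fin (n+1)) j)) =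
      Fin.snoc (fun j => Sum.elim p xs (ix j)) y := by
  funext j
  refine Fin.lastCases ?_ (fun j0 => ?_) j
  · simp
  · simp only [Fin.snoc_castSucc]
    cases h : ix j0 <;> simp [h]

theorem DfnA.all {m} {P : (Fin (m+1) → M) → Prop} (hP : DfnA atom mem (m+1) P) :
    DfnA atom mem m (fun v => ∀ y, P (Fin.snoc v y)) := by
  intro α n ix
  obtain ⟨φ, hφ⟩ := hP (Fin.snoc (fun j => Sum.map id Fin.castSucc (ix j)) (Sum.inr (Fin.last n)))
  refine ⟨φ.all, fun p xs => ?_⟩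
  letI := strLU atom mem
  rw [show Rlz (strLU atom mem) φ.all p xs = (φ.all).Realize p xs from rfl,
    BoundedFormula.realize_all]
  refine forall_congr' fun y => ?_
  exact (hφ p (Fin.snoc xs y)).trans (iff_of_eq (congrArg P (snoc_elim_aux ix p xs y)))

theorem DfnA.ex {m} {P : (Fin (m+1) → M) → Prop} (hP : DfnA atom mem (m+1) P) :
    DfnA atom mem m (fun v => ∃ y, P (Fin.snoc v y)) := by
  intro α n ix
  obtain ⟨φ, hφ⟩ := hP (Fin.snoc (fun j => Sum.map id Fin.castSucc (ix j)) (Sum.inr (Fin.last n)))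
  refine ⟨φ.ex, fun p xs => ?_⟩
  letI := strLU atom mem
  rw [show Rlz (strLU atom mem) φ.ex p xs = (φ.ex).Realize p xs from rfl,
    BoundedFormula.realize_ex]
  refine exists_congr fun y => ?_
  exact (hφ p (Fin.snoc xs y)).trans (iff_of_eq (congrArg P (snoc_elim_aux ix p xs y)))


theorem DfnA.spec {m : ℕ} {P : (Fin m → M) → Prop} (h : DfnA atom mem m P)
    {α : Type} {n : ℕ} (ix : Fin m → α ⊕ Fin n) :
    ∃ φ : LU.BoundedFormula α n,
      ∀ (p : α → M) (xs : Fin n → M),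
        Rlz (strLU atom mem) φ p xs ↔ P (fun j => Sum.elim p xs (ix j)) := h ix

attribute [irreducible] DfnA

theorem dfnA_isSet (i : Fin m) : DfnA atom mem m (fun v => ¬ atom (v i)) :=
  DfnA.not (atom := atom) (mem := mem) (m := m) (P := fun v => atom (v i)) (dfnA_atom i)

theorem dfnA_memE (atm : M → Prop) (mm : M → M → Prop) {m : ℕ} (i j : Fin m) :
    DfnA atm mm m (fun v => mm (v i) (v j)) := dfnA_mem i j
theorem dfnA_atomE (atm : M → Prop) (mm : M → M → Prop) {m : ℕ} (i : Fin m) :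
    DfnA atm mm m (fun v => atm (v i)) := dfnA_atom i
theorem dfnA_eqE (atm : M → Prop) (mm : M → M → Prop) {m : ℕ} (i j : Fin m) :
    DfnA atm mm m (fun v => v i = v j) := dfnA_eq i j
theorem dfnA_isSetE (atm : M → Prop) (mm : M → M → Prop) {m : ℕ} (i : Fin m) :
    DfnA atm mm m (fun v => ¬ atm (v i)) := dfnA_isSet i

theorem dfnA_IsOPair {m : ℕ} (i j k : Fin m) :
    DfnA atom mem m (fun v => IsOPair (fun z => ¬ atom z) mem (v i) (v j) (v k)) := by
  have c1 := DfnA.all (DfnA.iff (dfnA_memE atom mem (Fin.last (m+2)) i.castSucc.castSucc.castSucc)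
        (DfnA.or (dfnA_eqE atom mem (Fin.last (m+2)) ((Fin.last m).castSucc.castSucc))
          (dfnA_eqE atom mem (Fin.last (m+2)) ((Fin.last (m+1)).castSucc))))
  have c2 := DfnA.all (DfnA.iff (dfnA_memE atom mem (Fin.last (m+2)) ((Fin.last m).castSucc.castSucc))
        (dfnA_eqE atom mem (Fin.last (m+2)) j.castSucc.castSucc.castSucc))
  have c3 := DfnA.all (DfnA.iff (dfnA_memE atom mem (Fin.last (m+2)) ((Fin.last (m+1)).castSucc))
        (DfnA.or (dfnA_eqE atom mem (Fin.last (m+2)) j.castSucc.castSucc.castSucc)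
          (dfnA_eqE atom mem (Fin.last (m+2)) k.castSucc.castSucc.castSucc)))
  have body := DfnA.and (dfnA_isSetE atom mem ((Fin.last m).castSucc))
    (DfnA.and (dfnA_isSetE atom mem (Fin.last (m+1))) (DfnA.and c1 (DfnA.and c2 c3)))
  have e2 := DfnA.ex (DfnA.ex body)
  refine DfnA.congr (DfnA.and (dfnA_isSetE atom mem i) e2) fun v => ?_
  simp only [IsOPair, Fin.snoc_last, Fin.snoc_castSucc]

theorem dfnA_PairIn {m : ℕ} (i j k : Fin m) :
    DfnA atom mem m (fun v => PairIn (fun z => ¬ atom z) mem (v i) (v j) (v k)) := by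
  have hb := DfnA.ex (DfnA.and (dfnA_memE atom mem (Fin.last m) i.castSucc)
    (dfnA_IsOPair (Fin.last m) j.castSucc k.castSucc))
  refine DfnA.congr hb fun v => ?_
  simp only [PairIn, Fin.snoc_last, Fin.snoc_castSucc]

theorem dfnA_SetOfAtoms {m : ℕ} (i : Fin m) :
    DfnA atom mem m (fun v => SetOfAtoms atom mem (v i)) := by
  have hb := DfnA.and (dfnA_isSetE atom mem i)
    (DfnA.all (DfnA.imp (dfnA_memE atom mem (Fin.last m) i.castSucc)
      (dfnA_atomE atom mem (Fin.last m))))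
  refine DfnA.congr hb fun v => ?_
  simp only [SetOfAtoms, Fin.snoc_last, Fin.snoc_castSucc]

theorem dfnA_Disj {m : ℕ} (i j : Fin m) :
    DfnA atom mem m (fun v => DisjointS mem (v i) (v j)) := by
  have hb := DfnA.not (DfnA.ex (DfnA.and (dfnA_memE atom mem (Fin.last m) i.castSucc)
    (dfnA_memE atom mem (Fin.last m) j.castSucc)))
  refine DfnA.congr hb fun v => ?_
  simp only [DisjointS, Fin.snoc_last, Fin.snoc_castSucc]

theorem dfnA_IsFuncOn {m : ℕ} (i j : Fin m) :
    DfnA atom mem m (fun v => IsFuncOn (fun z => ¬ atom z) mem (v i) (v j)) := by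
  have c2 := DfnA.all (DfnA.imp (dfnA_memE atom mem (Fin.last m) i.castSucc)
    (DfnA.ex (DfnA.ex (DfnA.and
      (dfnA_memE atom mem ((Fin.last (m+1)).castSucc) j.castSucc.castSucc.castSucc)
      (dfnA_IsOPair ((Fin.last m).castSucc.castSucc) ((Fin.last (m+1)).castSucc)
        (Fin.last (m+2)))))))
  have c3 := DfnA.all (DfnA.imp (dfnA_memE atom mem (Fin.last m) j.castSucc)
    (DfnA.ex (dfnA_PairIn i.castSucc.castSucc ((Fin.last m).castSucc) (Fin.last (m+1)))))
  have c4 := DfnA.all (DfnA.all (DfnA.all (DfnA.imp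
    (dfnA_PairIn i.castSucc.castSucc.castSucc ((Fin.last m).castSucc.castSucc)
      ((Fin.last (m+1)).castSucc))
    (DfnA.imp (dfnA_PairIn i.castSucc.castSucc.castSucc ((Fin.last m).castSucc.castSucc)
      (Fin.last (m+2)))
      (dfnA_eqE atom mem ((Fin.last (m+1)).castSucc) (Fin.last (m+2)))))))
  have hb := DfnA.and (dfnA_isSetE atom mem i) (DfnA.and c2 (DfnA.and c3 c4))
  refine DfnA.congr hb fun v => ?_
  simp only [IsFuncOn, Fin.snoc_last, Fin.snoc_castSucc]

theorem dfnA_IsInjFuncInto {m : ℕ} (i j k : Fin m) :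
    DfnA atom mem m (fun v => IsInjFuncInto (fun z => ¬ atom z) mem (v i) (v j) (v k)) := by
  have c2 := DfnA.all (DfnA.all (DfnA.imp
    (dfnA_PairIn i.castSucc.castSucc ((Fin.last m).castSucc) (Fin.last (m+1)))
    (dfnA_memE atom mem (Fin.last (m+1)) k.castSucc.castSucc)))
  have c3 := DfnA.all (DfnA.all (DfnA.all (DfnA.imp
    (dfnA_PairIn i.castSucc.castSucc.castSucc ((Fin.last m).castSucc.castSucc)
      (Fin.last (m+2)))
    (DfnA.imp (dfnA_PairIn i.castSucc.castSucc.castSucc ((Fin.last (m+1)).castSucc)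
      (Fin.last (m+2)))
      (dfnA_eqE atom mem ((Fin.last m).castSucc.castSucc) ((Fin.last (m+1)).castSucc))))))
  have hb := DfnA.and (dfnA_IsFuncOn i j) (DfnA.and c2 c3)
  refine DfnA.congr hb fun v => ?_
  simp only [IsInjFuncInto, Fin.snoc_last, Fin.snoc_castSucc]

theorem dfnA_Equi {m : ℕ} (i j : Fin m) :
    DfnA atom mem m (fun v => EquinumerousI (fun z => ¬ atom z) mem (v i) (v j)) := by
  have c2 := DfnA.all (DfnA.imp (dfnA_memE atom mem (Fin.last (m+1)) j.castSucc.castSucc)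
    (DfnA.ex (DfnA.and (dfnA_memE atom mem (Fin.last (m+2)) i.castSucc.castSucc.castSucc)
      (dfnA_PairIn ((Fin.last m).castSucc.castSucc) (Fin.last (m+2))
        ((Fin.last (m+1)).castSucc)))))
  have hb := DfnA.ex (DfnA.and
    (dfnA_IsInjFuncInto (Fin.last m) i.castSucc j.castSucc) c2)
  refine DfnA.congr hb fun v => ?_
  simp only [EquinumerousI, Fin.snoc_last, Fin.snoc_castSucc]

/-- `f` is an order isomorphism from the `r`-initial segment of `x` in `w` onto the
`q`-initial segment of `y` in `v`. -/
def SegIsoP (atom : M → Prop) (mem : M → M → Prop) (w r v q f x y : M) : Prop :=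
  ¬ atom f ∧
  (∀ p, mem p f → ∃ a b, mem a w ∧ PairIn (fun z => ¬ atom z) mem r a x ∧ mem b v ∧
    PairIn (fun z => ¬ atom z) mem q b y ∧ IsOPair (fun z => ¬ atom z) mem p a b) ∧
  (∀ a, mem a w → PairIn (fun z => ¬ atom z) mem r a x →
    ∃ b, PairIn (fun z => ¬ atom z) mem f a b) ∧
  (∀ a b b', PairIn (fun z => ¬ atom z) mem f a b →
    PairIn (fun z => ¬ atom z) mem f a b' → b = b') ∧
  (∀ a a' b, PairIn (fun z => ¬ atom z) mem f a b →
    PairIn (fun z => ¬ atom z) mem f a' b → a = a') ∧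
  (∀ b, mem b v → PairIn (fun z => ¬ atom z) mem q b y →
    ∃ a, PairIn (fun z => ¬ atom z) mem f a b) ∧
  (∀ a a' b b', PairIn (fun z => ¬ atom z) mem f a b →
    PairIn (fun z => ¬ atom z) mem f a' b' → PairIn (fun z => ¬ atom z) mem r a a' →
    PairIn (fun z => ¬ atom z) mem q b b')

/-- The initial segment of `a` (in `w₀`, along `r₀`) is "blocked": some set `s` meets
every set of atoms equinumerous with that segment. -/
def BlockedSeg (atom : M → Prop) (mem : M → M → Prop) (w₀ r₀ a : M) : Prop :=
  ∃ s, ¬ atom s ∧ ∀ d, ∀ c,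
    (¬ atom d ∧ ∀ x, mem x d ↔ (mem x w₀ ∧ PairIn (fun z => ¬ atom z) mem r₀ x a)) →
    SetOfAtoms atom mem c → DisjointS mem c s →
    ¬ EquinumerousI (fun z => ¬ atom z) mem d c

theorem dfnA_SegIsoP {m : ℕ} (iw ir iv iq if' ixx iy : Fin m) :
    DfnA atom mem m (fun v =>
      SegIsoP atom mem (v iw) (v ir) (v iv) (v iq) (v if') (v ixx) (v iy)) := by
  have c1 := DfnA.all (DfnA.imp (dfnA_memE atom mem (Fin.last m) if'.castSucc)
    (DfnA.ex (DfnA.ex (DfnA.and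
      (dfnA_memE atom mem ((Fin.last (m+1)).castSucc) iw.castSucc.castSucc.castSucc)
      (DfnA.and (dfnA_PairIn ir.castSucc.castSucc.castSucc ((Fin.last (m+1)).castSucc)
          ixx.castSucc.castSucc.castSucc)
      (DfnA.and (dfnA_memE atom mem (Fin.last (m+2)) iv.castSucc.castSucc.castSucc)
      (DfnA.and (dfnA_PairIn iq.castSucc.castSucc.castSucc (Fin.last (m+2))
          iy.castSucc.castSucc.castSucc)
      (dfnA_IsOPair ((Fin.last m).castSucc.castSucc) ((Fin.last (m+1)).castSucc)
        (Fin.last (m+2))))))))))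
  have c2 := DfnA.all (DfnA.imp (dfnA_memE atom mem (Fin.last m) iw.castSucc)
    (DfnA.imp (dfnA_PairIn ir.castSucc (Fin.last m) ixx.castSucc)
      (DfnA.ex (dfnA_PairIn if'.castSucc.castSucc ((Fin.last m).castSucc)
        (Fin.last (m+1))))))
  have c3 := DfnA.all (DfnA.all (DfnA.all (DfnA.imp
    (dfnA_PairIn if'.castSucc.castSucc.castSucc ((Fin.last m).castSucc.castSucc)
      ((Fin.last (m+1)).castSucc))
    (DfnA.imp (dfnA_PairIn if'.castSucc.castSucc.castSucc ((Fin.last m).castSucc.castSucc)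
      (Fin.last (m+2)))
      (dfnA_eqE atom mem ((Fin.last (m+1)).castSucc) (Fin.last (m+2)))))))
  have c4 := DfnA.all (DfnA.all (DfnA.all (DfnA.imp
    (dfnA_PairIn if'.castSucc.castSucc.castSucc ((Fin.last m).castSucc.castSucc)
      (Fin.last (m+2)))
    (DfnA.imp (dfnA_PairIn if'.castSucc.castSucc.castSucc ((Fin.last (m+1)).castSucc)
      (Fin.last (m+2)))
      (dfnA_eqE atom mem ((Fin.last m).castSucc.castSucc) ((Fin.last (m+1)).castSucc))))))
  have c5 := DfnA.all (DfnA.imp (dfnA_memE atom mem (Fin.last m) iv.castSucc)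
    (DfnA.imp (dfnA_PairIn iq.castSucc (Fin.last m) iy.castSucc)
      (DfnA.ex (dfnA_PairIn if'.castSucc.castSucc (Fin.last (m+1))
        ((Fin.last m).castSucc)))))
  have c6 := DfnA.all (DfnA.all (DfnA.all (DfnA.all (DfnA.imp
    (dfnA_PairIn (atom := atom) (mem := mem) if'.castSucc.castSucc.castSucc.castSucc
      ((Fin.last m).castSucc.castSucc.castSucc) ((Fin.last (m+2)).castSucc))
    (DfnA.imp (dfnA_PairIn if'.castSucc.castSucc.castSucc.castSucc
      ((Fin.last (m+1)).castSucc.castSucc) (Fin.last (m+3)))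
      (DfnA.imp (dfnA_PairIn ir.castSucc.castSucc.castSucc.castSucc
        ((Fin.last m).castSucc.castSucc.castSucc) ((Fin.last (m+1)).castSucc.castSucc))
        (dfnA_PairIn iq.castSucc.castSucc.castSucc.castSucc
          ((Fin.last (m+2)).castSucc) (Fin.last (m+3)))))))))
  have hb := DfnA.and (dfnA_isSetE atom mem if') (DfnA.and c1 (DfnA.and c2 (DfnA.and c3
    (DfnA.and c4 (DfnA.and c5 c6)))))
  refine DfnA.congr hb fun v => ?_
  simp only [SegIsoP, Fin.snoc_last, Fin.snoc_castSucc]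

theorem dfnA_BlockedSeg {m : ℕ} (iw ir ia : Fin m) :
    DfnA atom mem m (fun v => BlockedSeg atom mem (v iw) (v ir) (v ia)) := by
  have charac := DfnA.and (dfnA_isSetE atom mem (Fin.last (m+1)).castSucc)
    (DfnA.all (DfnA.iff (dfnA_memE atom mem (Fin.last (m+3)) (Fin.last (m+1)).castSucc.castSucc)
      (DfnA.and (dfnA_memE atom mem (Fin.last (m+3)) iw.castSucc.castSucc.castSucc.castSucc)
        (dfnA_PairIn ir.castSucc.castSucc.castSucc.castSucc (Fin.last (m+3))
          ia.castSucc.castSucc.castSucc.castSucc))))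
  have inner := DfnA.imp charac (DfnA.imp (dfnA_SetOfAtoms (Fin.last (m+2)))
    (DfnA.imp (dfnA_Disj (Fin.last (m+2)) ((Fin.last m).castSucc.castSucc))
      (DfnA.not (dfnA_Equi ((Fin.last (m+1)).castSucc) (Fin.last (m+2))))))
  have hb := DfnA.ex (DfnA.and (dfnA_isSetE atom mem (Fin.last m))
    (DfnA.all (DfnA.all inner)))
  refine DfnA.congr hb fun v => ?_
  simp only [BlockedSeg, Fin.snoc_last, Fin.snoc_castSucc]

theorem sepA (hsep : SeparationScheme atom mem LU (strLU atom mem)) {m : ℕ}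
    {Q : (Fin (m+1) → M) → Prop} (hQ : DfnA atom mem (m+1) Q) (pv : Fin m → M) (a : M) :
    ∃ b, ¬ atom b ∧ ∀ x, mem x b ↔ (mem x a ∧ Q (Fin.snoc pv x)) := by
  obtain ⟨φ, hφ⟩ := hQ.spec (α := Fin m) (n := 1)
    (Fin.snoc (fun j => Sum.inl j) (Sum.inr 0))
  obtain ⟨b, hb1, hb2⟩ := hsep m φ pv a
  refine ⟨b, hb1, fun x => (hb2 x).trans (and_congr_right fun _ => ?_)⟩
  rw [hφ pv (![x])]
  refine iff_of_eq (congrArg Q ?_)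
  funext j
  refine Fin.lastCases ?_ (fun j0 => ?_) j
  · simp
  · simp

theorem colA (hcol : CollectionScheme atom mem LU (strLU atom mem)) {m : ℕ}
    {Q : (Fin (m+2) → M) → Prop} (hQ : DfnA atom mem (m+2) Q) (pv : Fin m → M) (a : M)
    (h : ∀ x, mem x a → ∃ y, Q (Fin.snoc (Fin.snoc pv x) y)) :
    ∃ b, ¬ atom b ∧ ∀ x, mem x a → ∃ y, mem y b ∧ Q (Fin.snoc (Fin.snoc pv x) y) := by
  obtain ⟨φ, hφ⟩ := hQ.spec (α := Fin m) (n := 2)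
    (Fin.snoc (Fin.snoc (fun j => Sum.inl j) (Sum.inr 0)) (Sum.inr 1))
  have key : ∀ x y : M, Rlz (strLU atom mem) φ pv ![x, y] ↔
      Q (Fin.snoc (Fin.snoc pv x) y) := by
    intro x y
    rw [hφ pv (![x, y])]
    refine iff_of_eq (congrArg Q ?_)
    funext j
    refine Fin.lastCases ?_ (fun j0 => ?_) j
    · simp
    · refine Fin.lastCases ?_ (fun j1 => ?_) j0 <;> simp
  obtain ⟨b, hb1, hb2⟩ := hcol m φ pv a
    (fun x hx => (h x hx).imp (fun y hy => (key x y).mpr hy))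
  exact ⟨b, hb1, fun x hx => (hb2 x hx).imp (fun y hy => ⟨hy.1, (key x y).mp hy.2⟩)⟩

theorem sepA0 (hsep : SeparationScheme atom mem LU (strLU atom mem))
    {Q : M → Prop} (hQ : DfnA atom mem 1 (fun v => Q (v 0))) (a : M) :
    ∃ b, ¬ atom b ∧ ∀ x, mem x b ↔ (mem x a ∧ Q x) := by
  obtain ⟨b, h1, h2⟩ := sepA hsep hQ ![] a
  exact ⟨b, h1, fun x => (h2 x).trans Iff.rfl⟩

theorem sepA1 (hsep : SeparationScheme atom mem LU (strLU atom mem))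
    {Q : M → M → Prop} (hQ : DfnA atom mem 2 (fun v => Q (v 0) (v 1))) (p1 a : M) :
    ∃ b, ¬ atom b ∧ ∀ x, mem x b ↔ (mem x a ∧ Q p1 x) := by
  obtain ⟨b, h1, h2⟩ := sepA hsep hQ ![p1] a
  exact ⟨b, h1, fun x => (h2 x).trans Iff.rfl⟩

theorem sepA2 (hsep : SeparationScheme atom mem LU (strLU atom mem))
    {Q : M → M → M → Prop} (hQ : DfnA atom mem 3 (fun v => Q (v 0) (v 1) (v 2)))
    (p1 p2 a : M) :
    ∃ b, ¬ atom b ∧ ∀ x, mem x b ↔ (mem x a ∧ Q p1 p2 x) := by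
  obtain ⟨b, h1, h2⟩ := sepA hsep hQ ![p1, p2] a
  exact ⟨b, h1, fun x => (h2 x).trans Iff.rfl⟩

theorem sepA3 (hsep : SeparationScheme atom mem LU (strLU atom mem))
    {Q : M → M → M → M → Prop} (hQ : DfnA atom mem 4 (fun v => Q (v 0) (v 1) (v 2) (v 3)))
    (p1 p2 p3 a : M) :
    ∃ b, ¬ atom b ∧ ∀ x, mem x b ↔ (mem x a ∧ Q p1 p2 p3 x) := by
  obtain ⟨b, h1, h2⟩ := sepA hsep hQ ![p1, p2, p3] a
  exact ⟨b, h1, fun x => (h2 x).trans Iff.rfl⟩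

theorem sepA4 (hsep : SeparationScheme atom mem LU (strLU atom mem))
    {Q : M → M → M → M → M → Prop}
    (hQ : DfnA atom mem 5 (fun v => Q (v 0) (v 1) (v 2) (v 3) (v 4)))
    (p1 p2 p3 p4 a : M) :
    ∃ b, ¬ atom b ∧ ∀ x, mem x b ↔ (mem x a ∧ Q p1 p2 p3 p4 x) := by
  obtain ⟨b, h1, h2⟩ := sepA hsep hQ ![p1, p2, p3, p4] a
  exact ⟨b, h1, fun x => (h2 x).trans Iff.rfl⟩

theorem sepA5 (hsep : SeparationScheme atom mem LU (strLU atom mem))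
    {Q : M → M → M → M → M → M → Prop}
    (hQ : DfnA atom mem 6 (fun v => Q (v 0) (v 1) (v 2) (v 3) (v 4) (v 5)))
    (p1 p2 p3 p4 p5 a : M) :
    ∃ b, ¬ atom b ∧ ∀ x, mem x b ↔ (mem x a ∧ Q p1 p2 p3 p4 p5 x) := by
  obtain ⟨b, h1, h2⟩ := sepA hsep hQ ![p1, p2, p3, p4, p5] a
  exact ⟨b, h1, fun x => (h2 x).trans Iff.rfl⟩

theorem colA1 (hcol : CollectionScheme atom mem LU (strLU atom mem))
    {Q : M → M → M → Prop} (hQ : DfnA atom mem 3 (fun v => Q (v 0) (v 1) (v 2)))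
    (p1 a : M) (h : ∀ x, mem x a → ∃ y, Q p1 x y) :
    ∃ b, ¬ atom b ∧ ∀ x, mem x a → ∃ y, mem y b ∧ Q p1 x y := by
  obtain ⟨b, h1, h2⟩ := colA hcol hQ ![p1] a h
  exact ⟨b, h1, h2⟩

theorem colA2 (hcol : CollectionScheme atom mem LU (strLU atom mem))
    {Q : M → M → M → M → Prop} (hQ : DfnA atom mem 4 (fun v => Q (v 0) (v 1) (v 2) (v 3)))
    (p1 p2 a : M) (h : ∀ x, mem x a → ∃ y, Q p1 p2 x y) :
    ∃ b, ¬ atom b ∧ ∀ x, mem x a → ∃ y, mem y b ∧ Q p1 p2 x y := by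
  obtain ⟨b, h1, h2⟩ := colA hcol hQ ![p1, p2] a h
  exact ⟨b, h1, h2⟩

theorem colA4 (hcol : CollectionScheme atom mem LU (strLU atom mem))
    {Q : M → M → M → M → M → M → Prop}
    (hQ : DfnA atom mem 6 (fun v => Q (v 0) (v 1) (v 2) (v 3) (v 4) (v 5)))
    (p1 p2 p3 p4 a : M) (h : ∀ x, mem x a → ∃ y, Q p1 p2 p3 p4 x y) :
    ∃ b, ¬ atom b ∧ ∀ x, mem x a → ∃ y, mem y b ∧ Q p1 p2 p3 p4 x y := by
  obtain ⟨b, h1, h2⟩ := colA hcol hQ ![p1, p2, p3, p4] a h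
  exact ⟨b, h1, h2⟩

/-! Basic internal set-theoretic facts -/

theorem exists_emptyset (hinf : InfinityAx atom mem) :
    ∃ e, ¬ atom e ∧ ∀ z, ¬ mem z e := by
  obtain ⟨I, -, ⟨e, -, he1, he2⟩, -⟩ := hinf
  exact ⟨e, he1, he2⟩

theorem opair_exists (hpair : PairingAx atom mem) (x y : M) :
    ∃ p, IsOPair (fun z => ¬ atom z) mem p x y := by
  obtain ⟨s, hs, hsel⟩ := hpair x x
  obtain ⟨d, hd, hdel⟩ := hpair x y
  obtain ⟨p, hp, hpel⟩ := hpair s d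
  refine ⟨p, hp, s, d, hs, hd, hpel, fun z => (hsel z).trans (or_self_iff), hdel⟩

theorem opair_inj {p x y x' y' : M} (h1 : IsOPair (fun z => ¬ atom z) mem p x y)
    (h2 : IsOPair (fun z => ¬ atom z) mem p x' y') : x = x' ∧ y = y' := by
  obtain ⟨-, s, d, -, -, hp, hs, hd⟩ := h1
  obtain ⟨-, s', d', -, -, hp', hs', hd'⟩ := h2
  -- transfer of characterizations along object equality
  have hss : s = s' ∨ s = d' := (hp' s).1 ((hp s).2 (Or.inl rfl))
  have hx : x = x' := by
    rcases hss with h | h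
    · have := (hs' x).1 (h ▸ (hs x).2 rfl)
      exact this
    · rcases (hd' x).1 (h ▸ (hs x).2 rfl) with h' | h'
      · exact h'
      · -- x = y' ; also x' ∈ d' = s so x' = x
        have := (hs x').1 (h ▸ (hd' x').2 (Or.inl rfl))
        exact this.symm
  subst hx
  constructor
  · rfl
  · -- y = y'
    have hdd : d = s' ∨ d = d' := (hp' d).1 ((hp d).2 (Or.inr rfl))
    rcases hdd with h | h
    · -- d = {x}, so y = x
      have hyx : y = x := (hs' y).1 (h ▸ (hd y).2 (Or.inr rfl))
      have hdd' : d' = s ∨ d' = d := (hp d').1 ((hp' d').2 (Or.inr rfl))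
      rcases hdd' with h' | h'
      · have hy'x : y' = x := (hs y').1 (h' ▸ (hd' y').2 (Or.inr rfl))
        rw [hyx, hy'x]
      · rcases (hd y').1 (h' ▸ (hd' y').2 (Or.inr rfl)) with h'' | h''
        · rw [hyx, h'']
        · exact h''.symm
    · rcases (hd' y).1 (h ▸ (hd y).2 (Or.inr rfl)) with h' | h'
      · -- y = x; then y' ∈ d' = d gives y' = x or y' = y
        rcases (hd y').1 (h ▸ (hd' y').2 (Or.inr rfl)) with h'' | h''
        · rw [h', h'']
        · exact h''.symm
      · exact h'

theorem binunion_exists (hpair : PairingAx atom mem) (hunion : UnionAx atom mem)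
    (x y : M) : ∃ u, ¬ atom u ∧ ∀ z, mem z u ↔ (mem z x ∨ mem z y) := by
  obtain ⟨p, hp, hpel⟩ := hpair x y
  obtain ⟨u, hu, huel⟩ := hunion p
  refine ⟨u, hu, fun z => (huel z).trans ?_⟩
  constructor
  · rintro ⟨w, hw, hzw⟩
    rcases (hpel w).1 hw with rfl | rfl
    · exact Or.inl hzw
    · exact Or.inr hzw
  · rintro (h | h)
    · exact ⟨x, (hpel x).2 (Or.inl rfl), h⟩
    · exact ⟨y, (hpel y).2 (Or.inr rfl), h⟩

/-! Well-order utilities -/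

theorem wo_irrefl {r w : M} (h : IsWellOrderOn (fun z => ¬ atom z) mem r w) :
    ∀ x, mem x w → ¬ PairIn (fun z => ¬ atom z) mem r x x := h.2.2.1

theorem wo_trans {r w : M} (h : IsWellOrderOn (fun z => ¬ atom z) mem r w) :
    ∀ x y z, PairIn (fun z => ¬ atom z) mem r x y →
      PairIn (fun z => ¬ atom z) mem r y z → PairIn (fun z => ¬ atom z) mem r x z :=
  h.2.2.2.1

theorem wo_total {r w : M} (h : IsWellOrderOn (fun z => ¬ atom z) mem r w) :
    ∀ x y, mem x w → mem y w → (x = y ∨ PairIn (fun z => ¬ atom z) mem r x y ∨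
      PairIn (fun z => ¬ atom z) mem r y x) := h.2.2.2.2.1

theorem wo_least {r w : M} (h : IsWellOrderOn (fun z => ¬ atom z) mem r w) :
    ∀ s, ¬ atom s → (∃ x, mem x s) → (∀ x, mem x s → mem x w) →
      ∃ m, mem m s ∧ ∀ x, mem x s → x = m ∨ PairIn (fun z => ¬ atom z) mem r m x :=
  h.2.2.2.2.2

theorem wo_shape {r w : M} (h : IsWellOrderOn (fun z => ¬ atom z) mem r w) :
    ∀ p, mem p r → ∃ x y, mem x w ∧ mem y w ∧ IsOPair (fun z => ¬ atom z) mem p x y :=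
  h.2.1

/-- Elements related by the order are in the field. -/
theorem wo_mem_left {r w x y : M} (h : IsWellOrderOn (fun z => ¬ atom z) mem r w)
    (hxy : PairIn (fun z => ¬ atom z) mem r x y) : mem x w ∧ mem y w := by
  obtain ⟨p, hpr, hop⟩ := hxy
  obtain ⟨a, b, haw, hbw, hop'⟩ := wo_shape h p hpr
  obtain ⟨h1, h2⟩ := opair_inj hop hop'
  exact ⟨h1 ▸ haw, h2 ▸ hbw⟩

theorem wo_asymm {r w x y : M} (h : IsWellOrderOn (fun z => ¬ atom z) mem r w)
    (hxy : PairIn (fun z => ¬ atom z) mem r x y) :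
    ¬ PairIn (fun z => ¬ atom z) mem r y x := by
  intro hyx
  exact wo_irrefl h x (wo_mem_left h hxy).1 (wo_trans h x y x hxy hyx)

/-- Restriction of a well-order to a subset. -/
theorem wo_restrict (hsep : SeparationScheme atom mem LU (strLU atom mem))
    {r w d : M} (h : IsWellOrderOn (fun z => ¬ atom z) mem r w) (hd : ¬ atom d)
    (hdw : ∀ x, mem x d → mem x w) :
    ∃ r', IsWellOrderOn (fun z => ¬ atom z) mem r' d ∧
      (∀ x y, PairIn (fun z => ¬ atom z) mem r' x y ↔
        (mem x d ∧ mem y d ∧ PairIn (fun z => ¬ atom z) mem r x y)) := by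
  obtain ⟨r', hr'1, hr'2⟩ := sepA1 hsep
    (Q := fun pd p => ∃ a b, mem a pd ∧ mem b pd ∧ IsOPair (fun z => ¬ atom z) mem p a b)
    (by
      have hb := DfnA.ex (DfnA.ex (DfnA.and
        (dfnA_memE atom mem ((Fin.last 2).castSucc) (0 : Fin 2).castSucc.castSucc)
        (DfnA.and (dfnA_memE atom mem (Fin.last 3) (0 : Fin 2).castSucc.castSucc)
          (dfnA_IsOPair (1 : Fin 2).castSucc.castSucc ((Fin.last 2).castSucc)
            (Fin.last 3)))))
      refine DfnA.congr hb fun v => ?_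
      simp only [Fin.snoc_last, Fin.snoc_castSucc])
    d r
  have hpair' : ∀ x y, PairIn (fun z => ¬ atom z) mem r' x y ↔
      (mem x d ∧ mem y d ∧ PairIn (fun z => ¬ atom z) mem r x y) := by
    intro x y
    constructor
    · rintro ⟨p, hpr', hop⟩
      obtain ⟨hpr, a, b, had, hbd, hop'⟩ := (hr'2 p).1 hpr'
      obtain ⟨rfl, rfl⟩ := opair_inj hop hop'
      exact ⟨had, hbd, ⟨p, hpr, hop⟩⟩
    · rintro ⟨hxd, hyd, p, hpr, hop⟩
      exact ⟨p, (hr'2 p).2 ⟨hpr, x, y, hxd, hyd, hop⟩, hop⟩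
  refine ⟨r', ⟨hr'1, ?_, ?_, ?_, ?_, ?_⟩, hpair'⟩
  · intro p hpr'
    obtain ⟨hpr, a, b, had, hbd, hop⟩ := (hr'2 p).1 hpr'
    exact ⟨a, b, had, hbd, hop⟩
  · intro x hxd hxx
    exact wo_irrefl h x (hdw x hxd) ((hpair' x x).1 hxx).2.2
  · intro x y z hxy hyz
    obtain ⟨hxd, hyd, hxy'⟩ := (hpair' x y).1 hxy
    obtain ⟨-, hzd, hyz'⟩ := (hpair' y z).1 hyz
    exact (hpair' x z).2 ⟨hxd, hzd, wo_trans h x y z hxy' hyz'⟩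
  · intro x y hxd hyd
    rcases wo_total h x y (hdw x hxd) (hdw y hyd) with h' | h' | h'
    · exact Or.inl h'
    · exact Or.inr (Or.inl ((hpair' x y).2 ⟨hxd, hyd, h'⟩))
    · exact Or.inr (Or.inr ((hpair' y x).2 ⟨hyd, hxd, h'⟩))
  · intro s hs hsne hsd
    obtain ⟨mn, hmns, hmn⟩ := wo_least h s hs hsne (fun x hx => hdw x (hsd x hx))
    refine ⟨mn, hmns, fun x hx => ?_⟩
    rcases hmn x hx with h' | h'
    · exact Or.inl h'
    · exact Or.inr ((hpair' mn x).2 ⟨hsd mn hmns, hsd x hx, h'⟩)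

/-! Internal function utilities -/

theorem pairIn_dom {f a x y : M} (hf : IsFuncOn (fun z => ¬ atom z) mem f a)
    (h : PairIn (fun z => ¬ atom z) mem f x y) : mem x a := by
  obtain ⟨p, hpf, hop⟩ := h
  obtain ⟨x', y', hx'a, hop'⟩ := hf.2.1 p hpf
  obtain ⟨rfl, rfl⟩ := opair_inj hop hop'
  exact hx'a

theorem image_exists (hsep : SeparationScheme atom mem LU (strLU atom mem)) (a f v : M) :
    ∃ im, ¬ atom im ∧ ∀ y, mem y im ↔
      (mem y v ∧ ∃ x, mem x a ∧ PairIn (fun z => ¬ atom z) mem f x y) := by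
  refine sepA2 hsep (Q := fun pa pf y => ∃ x, mem x pa ∧
    PairIn (fun z => ¬ atom z) mem pf x y) ?_ a f v
  have hb := DfnA.ex (DfnA.and (dfnA_memE atom mem (Fin.last 3) (0 : Fin 3).castSucc)
    (dfnA_PairIn (1 : Fin 3).castSucc (Fin.last 3) (2 : Fin 3).castSucc))
  refine DfnA.congr hb fun v => ?_
  simp only [Fin.snoc_last, Fin.snoc_castSucc]

/-- An injective function is a bijection onto its image. -/
theorem bij_onto_image {f a v im : M}
    (hf : IsInjFuncInto (fun z => ¬ atom z) mem f a v) (him : ¬ atom im)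
    (himel : ∀ y, mem y im ↔
      (mem y v ∧ ∃ x, mem x a ∧ PairIn (fun z => ¬ atom z) mem f x y)) :
    IsInjFuncInto (fun z => ¬ atom z) mem f a im ∧
      (∀ y, mem y im → ∃ x, mem x a ∧ PairIn (fun z => ¬ atom z) mem f x y) := by
  obtain ⟨hfun, hinto, hinj⟩ := hf
  refine ⟨⟨hfun, ?_, hinj⟩, fun y hy => ((himel y).1 hy).2⟩
  intro x y hxy
  exact (himel y).2 ⟨hinto x y hxy, x, pairIn_dom hfun hxy, hxy⟩

theorem inverse_exists (hpair : PairingAx atom mem)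
    (hsep : SeparationScheme atom mem LU (strLU atom mem))
    (hcol : CollectionScheme atom mem LU (strLU atom mem))
    {f a b : M} (hf : IsInjFuncInto (fun z => ¬ atom z) mem f a b)
    (hsurj : ∀ y, mem y b → ∃ x, mem x a ∧ PairIn (fun z => ¬ atom z) mem f x y) :
    ∃ g, IsInjFuncInto (fun z => ¬ atom z) mem g b a ∧
      (∀ x, mem x a → ∃ y, mem y b ∧ PairIn (fun z => ¬ atom z) mem g y x) ∧
      (∀ y x, PairIn (fun z => ¬ atom z) mem g y x ↔
        (mem y b ∧ PairIn (fun z => ¬ atom z) mem f x y)) := by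
  obtain ⟨hfun, hinto, hinj⟩ := hf
  have hQ : DfnA atom mem 3 (fun v => ∃ x, PairIn (fun z => ¬ atom z) mem (v 0) x (v 1) ∧
      IsOPair (fun z => ¬ atom z) mem (v 2) (v 1) x) := by
    have hb := DfnA.ex (DfnA.and
      (dfnA_PairIn (atom := atom) (mem := mem) (0 : Fin 3).castSucc (Fin.last 3)
        (1 : Fin 3).castSucc)
      (dfnA_IsOPair (2 : Fin 3).castSucc (1 : Fin 3).castSucc (Fin.last 3)))
    refine DfnA.congr hb fun v => ?_
    simp only [Fin.snoc_last, Fin.snoc_castSucc]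
  obtain ⟨c, -, hc⟩ := colA1 hcol
    (Q := fun pf y pr => ∃ x, PairIn (fun z => ¬ atom z) mem pf x y ∧
      IsOPair (fun z => ¬ atom z) mem pr y x) hQ f b
    (by
      intro y hy
      obtain ⟨x, hxa, hxy⟩ := hsurj y hy
      obtain ⟨pr, hpr⟩ := opair_exists hpair y x
      exact ⟨pr, x, hxy, hpr⟩)
  have hQ2 : DfnA atom mem 3 (fun v => ∃ y x, mem y (v 0) ∧
      PairIn (fun z => ¬ atom z) mem (v 1) x y ∧
      IsOPair (fun z => ¬ atom z) mem (v 2) y x) := by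
    have hb := DfnA.ex (DfnA.ex (DfnA.and
      (dfnA_memE atom mem ((Fin.last 3).castSucc) (0 : Fin 3).castSucc.castSucc)
      (DfnA.and (dfnA_PairIn (1 : Fin 3).castSucc.castSucc (Fin.last 4)
        ((Fin.last 3).castSucc))
      (dfnA_IsOPair (2 : Fin 3).castSucc.castSucc ((Fin.last 3).castSucc) (Fin.last 4)))))
    refine DfnA.congr hb fun v => ?_
    simp only [Fin.snoc_last, Fin.snoc_castSucc]
  obtain ⟨g, hg1, hg2⟩ := sepA2 hsep
    (Q := fun pb pf pr => ∃ y x, mem y pb ∧ PairIn (fun z => ¬ atom z) mem pf x y ∧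
      IsOPair (fun z => ¬ atom z) mem pr y x) hQ2 b f c
  have hchar : ∀ y x, PairIn (fun z => ¬ atom z) mem g y x ↔
      (mem y b ∧ PairIn (fun z => ¬ atom z) mem f x y) := by
    intro y x
    constructor
    · rintro ⟨p, hpg, hop⟩
      obtain ⟨-, y', x', hy'b, hfx'y', hop'⟩ := (hg2 p).1 hpg
      obtain ⟨rfl, rfl⟩ := opair_inj hop hop'
      exact ⟨hy'b, hfx'y'⟩
    · rintro ⟨hyb, hfxy⟩
      obtain ⟨pr, hprc, x', hfx'y, hop⟩ := hc y hyb
      have hx' : x' = x := hinj x' x y hfx'y hfxy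
      subst hx'
      exact ⟨pr, (hg2 pr).2 ⟨hprc, y, x', hyb, hfx'y, hop⟩, hop⟩
  refine ⟨g, ⟨⟨hg1, ?_, ?_, ?_⟩, ?_, ?_⟩, ?_, hchar⟩
  · intro p hpg
    obtain ⟨-, y, x, hyb, -, hop⟩ := (hg2 p).1 hpg
    exact ⟨y, x, hyb, hop⟩
  · intro y hyb
    obtain ⟨x, -, hxy⟩ := hsurj y hyb
    exact ⟨x, (hchar y x).2 ⟨hyb, hxy⟩⟩
  · intro y x x' h1 h2
    exact hinj x x' y ((hchar y x).1 h1).2 ((hchar y x').1 h2).2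
  · intro y x hxy
    exact pairIn_dom hfun ((hchar y x).1 hxy).2
  · intro y y' x h1 h2
    exact hfun.2.2.2 x y y' ((hchar y x).1 h1).2 ((hchar y' x).1 h2).2
  · intro x hxa
    obtain ⟨y, hxy⟩ := hfun.2.2.1 x hxa
    have hyb := hinto x y hxy
    exact ⟨y, hyb, (hchar y x).2 ⟨hyb, hxy⟩⟩

theorem comp_exists (hpair : PairingAx atom mem)
    (hsep : SeparationScheme atom mem LU (strLU atom mem))
    (hcol : CollectionScheme atom mem LU (strLU atom mem))
    {g f w d c : M} (hg : IsInjFuncInto (fun z => ¬ atom z) mem g w d)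
    (hf : IsInjFuncInto (fun z => ¬ atom z) mem f d c) :
    ∃ e, IsInjFuncInto (fun z => ¬ atom z) mem e w c ∧
      (∀ x z, PairIn (fun z => ¬ atom z) mem e x z ↔
        (mem x w ∧ ∃ y, PairIn (fun z => ¬ atom z) mem g x y ∧
          PairIn (fun z => ¬ atom z) mem f y z)) := by
  obtain ⟨hgfun, hginto, hginj⟩ := hg
  obtain ⟨hffun, hfinto, hfinj⟩ := hf
  have hQ : DfnA atom mem 4 (fun v => ∃ y z, PairIn (fun z => ¬ atom z) mem (v 0) (v 2) y ∧
      PairIn (fun z => ¬ atom z) mem (v 1) y z ∧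
      IsOPair (fun z => ¬ atom z) mem (v 3) (v 2) z) := by
    have hb := DfnA.ex (DfnA.ex (DfnA.and
      (dfnA_PairIn (atom := atom) (mem := mem) (0 : Fin 4).castSucc.castSucc
        (2 : Fin 4).castSucc.castSucc ((Fin.last 4).castSucc))
      (DfnA.and (dfnA_PairIn (1 : Fin 4).castSucc.castSucc ((Fin.last 4).castSucc)
        (Fin.last 5))
      (dfnA_IsOPair (3 : Fin 4).castSucc.castSucc (2 : Fin 4).castSucc.castSucc
        (Fin.last 5)))))
    refine DfnA.congr hb fun v => ?_
    simp only [Fin.snoc_last, Fin.snoc_castSucc]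
  obtain ⟨cc, -, hcc⟩ := colA2 hcol
    (Q := fun pg pf x pr => ∃ y z, PairIn (fun z => ¬ atom z) mem pg x y ∧
      PairIn (fun z => ¬ atom z) mem pf y z ∧
      IsOPair (fun z => ¬ atom z) mem pr x z) hQ g f w
    (by
      intro x hxw
      obtain ⟨y, hxy⟩ := hgfun.2.2.1 x hxw
      obtain ⟨z, hyz⟩ := hffun.2.2.1 y (hginto x y hxy)
      obtain ⟨pr, hpr⟩ := opair_exists hpair x z
      exact ⟨pr, y, z, hxy, hyz, hpr⟩)
  have hQ2 : DfnA atom mem 5 (fun v => ∃ x y z, mem x (v 0) ∧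
      PairIn (fun z => ¬ atom z) mem (v 1) x y ∧
      PairIn (fun z => ¬ atom z) mem (v 2) y z ∧
      IsOPair (fun z => ¬ atom z) mem (v 4) x z) := by
    have hb := DfnA.ex (DfnA.ex (DfnA.ex (DfnA.and
      (dfnA_memE atom mem (Fin.last 5).castSucc.castSucc
        (0 : Fin 5).castSucc.castSucc.castSucc)
      (DfnA.and (dfnA_PairIn (1 : Fin 5).castSucc.castSucc.castSucc
        (Fin.last 5).castSucc.castSucc ((Fin.last 6).castSucc))
      (DfnA.and (dfnA_PairIn (2 : Fin 5).castSucc.castSucc.castSucc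
        ((Fin.last 6).castSucc) (Fin.last 7))
      (dfnA_IsOPair (4 : Fin 5).castSucc.castSucc.castSucc
        (Fin.last 5).castSucc.castSucc (Fin.last 7)))))))
    refine DfnA.congr hb fun v => ?_
    simp only [Fin.snoc_last, Fin.snoc_castSucc]
  obtain ⟨e, he1, he2⟩ := sepA4 hsep
    (Q := fun pw pg pf _pd pr => ∃ x y z, mem x pw ∧
      PairIn (fun z => ¬ atom z) mem pg x y ∧
      PairIn (fun z => ¬ atom z) mem pf y z ∧
      IsOPair (fun z => ¬ atom z) mem pr x z) hQ2 w g f d cc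
  have hchar : ∀ x z, PairIn (fun z => ¬ atom z) mem e x z ↔
      (mem x w ∧ ∃ y, PairIn (fun z => ¬ atom z) mem g x y ∧
        PairIn (fun z => ¬ atom z) mem f y z) := by
    intro x z
    constructor
    · rintro ⟨p, hpe, hop⟩
      obtain ⟨-, x', y, z', hx'w, hgxy, hfyz, hop'⟩ := (he2 p).1 hpe
      obtain ⟨rfl, rfl⟩ := opair_inj hop hop'
      exact ⟨hx'w, y, hgxy, hfyz⟩
    · rintro ⟨hxw, y, hgxy, hfyz⟩
      obtain ⟨pr, hprcc, y', z', hgxy', hfy'z', hop⟩ := hcc x hxw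
      have hy : y' = y := hgfun.2.2.2 x y' y hgxy' hgxy
      rw [hy] at hfy'z'
      have hz : z' = z := hffun.2.2.2 y z' z hfy'z' hfyz
      rw [hz] at hop
      exact ⟨pr, (he2 pr).2 ⟨hprcc, x, y, z, hxw, hgxy, hfyz, hop⟩, hop⟩
  refine ⟨e, ⟨⟨he1, ?_, ?_, ?_⟩, ?_, ?_⟩, hchar⟩
  · intro p hpe
    obtain ⟨-, x, y, z, hxw, -, -, hop⟩ := (he2 p).1 hpe
    exact ⟨x, z, hxw, hop⟩
  · intro x hxw
    obtain ⟨y, hxy⟩ := hgfun.2.2.1 x hxw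
    obtain ⟨z, hyz⟩ := hffun.2.2.1 y (hginto x y hxy)
    exact ⟨z, (hchar x z).2 ⟨hxw, y, hxy, hyz⟩⟩
  · intro x z z' h1 h2
    obtain ⟨-, y1, hg1, hf1⟩ := (hchar x z).1 h1
    obtain ⟨-, y2, hg2, hf2⟩ := (hchar x z').1 h2
    have hy : y1 = y2 := hgfun.2.2.2 x y1 y2 hg1 hg2
    rw [hy] at hf1
    exact hffun.2.2.2 y2 z z' hf1 hf2
  · intro x z h
    obtain ⟨-, y, -, hf1⟩ := (hchar x z).1 h
    exact hfinto y z hf1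
  · intro x x' z h1 h2
    obtain ⟨-, y1, hg1, hf1⟩ := (hchar x z).1 h1
    obtain ⟨-, y2, hg2, hf2⟩ := (hchar x' z).1 h2
    have hy : y1 = y2 := hfinj y1 y2 z hf1 hf2
    rw [hy] at hg1
    exact hginj x x' y2 hg1 hg2

/-! Initial-segment isomorphisms: basic facts -/

theorem segiso_bounds {w r v q f x y a b : M}
    (s : SegIsoP atom mem w r v q f x y)
    (h : PairIn (fun z => ¬ atom z) mem f a b) :
    mem a w ∧ PairIn (fun z => ¬ atom z) mem r a x ∧ mem b v ∧
      PairIn (fun z => ¬ atom z) mem q b y := by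
  obtain ⟨p, hpf, hop⟩ := h
  obtain ⟨a', b', ha, hra, hb, hqb, hop'⟩ := s.2.1 p hpf
  obtain ⟨rfl, rfl⟩ := opair_inj hop hop'
  exact ⟨ha, hra, hb, hqb⟩

theorem segiso_unique (hsep : SeparationScheme atom mem LU (strLU atom mem))
    {w r v q x y y' f f' : M}
    (hw : IsWellOrderOn (fun z => ¬ atom z) mem r w)
    (hv : IsWellOrderOn (fun z => ¬ atom z) mem q v)
    (hyv : mem y v) (hy'v : mem y' v)
    (s1 : SegIsoP atom mem w r v q f x y) (s2 : SegIsoP atom mem w r v q f' x y') :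
    y = y' := by
  have hQ : DfnA atom mem 5 (fun u => PairIn (fun z => ¬ atom z) mem (u 0) (u 4) (u 1) ∧
      ∃ b b', PairIn (fun z => ¬ atom z) mem (u 2) (u 4) b ∧
        PairIn (fun z => ¬ atom z) mem (u 3) (u 4) b' ∧ ¬ b = b') := by
    have hb := DfnA.and (dfnA_PairIn (atom := atom) (mem := mem) (0 : Fin 5) 4 1)
      (DfnA.ex (DfnA.ex (DfnA.and
        (dfnA_PairIn (2 : Fin 5).castSucc.castSucc (4 : Fin 5).castSucc.castSucc
          ((Fin.last 5).castSucc))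
        (DfnA.and (dfnA_PairIn (3 : Fin 5).castSucc.castSucc (4 : Fin 5).castSucc.castSucc
          (Fin.last 6))
        (DfnA.not (dfnA_eqE atom mem ((Fin.last 5).castSucc) (Fin.last 6)))))))
    refine DfnA.congr hb fun u => ?_
    simp only [Fin.snoc_last, Fin.snoc_castSucc]
  obtain ⟨Δ, hΔs, hΔel⟩ := sepA4 hsep
    (Q := fun pr px pf pf' a => PairIn (fun z => ¬ atom z) mem pr a px ∧
      ∃ b b', PairIn (fun z => ¬ atom z) mem pf a b ∧
        PairIn (fun z => ¬ atom z) mem pf' a b' ∧ ¬ b = b') hQ r x f f' w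
  have hΔsub : ∀ a, mem a Δ → mem a w := fun a ha => ((hΔel a).1 ha).1
  by_cases hne : ∃ a, mem a Δ
  · obtain ⟨mn, hmnΔ, hmin⟩ := wo_least hw Δ hΔs hne hΔsub
    obtain ⟨hmw, hrmx, b, b', hfb, hf'b', hbb'⟩ := (hΔel mn).1 hmnΔ
    have hbnd := segiso_bounds s1 hfb
    have hbnd' := segiso_bounds s2 hf'b'
    have hnotΔ : ∀ a'', mem a'' w → PairIn (fun z => ¬ atom z) mem r a'' mn →
        ¬ mem a'' Δ := by
      intro a'' ha''w hlt hmem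
      rcases hmin a'' hmem with rfl | h'
      · exact wo_irrefl hw a'' ha''w hlt
      · exact wo_irrefl hw a'' ha''w (wo_trans hw _ _ _ hlt h')
    have hagr : ∀ a'', mem a'' w → PairIn (fun z => ¬ atom z) mem r a'' mn →
        ∀ c c', PairIn (fun z => ¬ atom z) mem f a'' c →
          PairIn (fun z => ¬ atom z) mem f' a'' c' → c = c' := by
      intro a'' hw'' hlt c c' hc hc'
      by_contra hne'
      exact hnotΔ a'' hw'' hlt
        ((hΔel a'').2 ⟨hw'', (segiso_bounds s1 hc).2.1, c, c', hc, hc', hne'⟩)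
    rcases wo_total hv b b' hbnd.2.2.1 hbnd'.2.2.1 with rfl | hlt | hlt
    · exact absurd rfl hbb'
    · have hqby' := wo_trans hv b b' y' hlt hbnd'.2.2.2
      obtain ⟨a'', hf'a''⟩ := s2.2.2.2.2.2.1 b hbnd.2.2.1 hqby'
      have hbnd'' := segiso_bounds s2 hf'a''
      rcases wo_total hw a'' mn hbnd''.1 hmw with rfl | h2 | h2
      · exact absurd (s2.2.2.2.1 a'' b b' hf'a'' hf'b') hbb'
      · obtain ⟨c, hfc⟩ := s1.2.2.1 a'' hbnd''.1 hbnd''.2.1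
        have hcb : c = b := hagr a'' hbnd''.1 h2 c b hfc hf'a''
        rw [hcb] at hfc
        have he : a'' = mn := s1.2.2.2.2.1 a'' mn b hfc hfb
        exact (wo_irrefl hw mn hmw (he ▸ h2)).elim
      · exact (wo_asymm hv hlt (s2.2.2.2.2.2.2 mn a'' b' b hf'b' hf'a'' h2)).elim
    · have hqb'y := wo_trans hv b' b y hlt hbnd.2.2.2
      obtain ⟨a'', hfa''⟩ := s1.2.2.2.2.2.1 b' hbnd'.2.2.1 hqb'y
      have hbnd'' := segiso_bounds s1 hfa''
      rcases wo_total hw a'' mn hbnd''.1 hmw with rfl | h2 | h2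
      · exact absurd (s1.2.2.2.1 a'' b b' hfb hfa'') hbb'
      · obtain ⟨c, hf'c⟩ := s2.2.2.1 a'' hbnd''.1 hbnd''.2.1
        have hcb : b' = c := hagr a'' hbnd''.1 h2 b' c hfa'' hf'c
        rw [← hcb] at hf'c
        have he : a'' = mn := s2.2.2.2.2.1 a'' mn b' hf'c hf'b'
        exact (wo_irrefl hw mn hmw (he ▸ h2)).elim
      · exact (wo_asymm hv hlt (s1.2.2.2.2.2.2 mn a'' b b' hfb hfa'' h2)).elim
  · have hagr : ∀ a c c', PairIn (fun z => ¬ atom z) mem f a c →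
        PairIn (fun z => ¬ atom z) mem f' a c' → c = c' := by
      intro a c c' hc hc'
      by_contra hne'
      exact hne ⟨a, (hΔel a).2 ⟨(segiso_bounds s1 hc).1, (segiso_bounds s1 hc).2.1,
        c, c', hc, hc', hne'⟩⟩
    by_contra hyy'
    rcases wo_total hv y y' hyv hy'v with h | h | h
    · exact hyy' h
    · obtain ⟨a, hf'a⟩ := s2.2.2.2.2.2.1 y hyv h
      have hbnd := segiso_bounds s2 hf'a
      obtain ⟨c, hfc⟩ := s1.2.2.1 a hbnd.1 hbnd.2.1
      have hcy : c = y := hagr a c y hfc hf'a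
      rw [hcy] at hfc
      exact wo_irrefl hv y hyv (segiso_bounds s1 hfc).2.2.2
    · obtain ⟨a, hfa⟩ := s1.2.2.2.2.2.1 y' hy'v h
      have hbnd := segiso_bounds s1 hfa
      obtain ⟨c, hf'c⟩ := s2.2.2.1 a hbnd.1 hbnd.2.1
      have hcy : y' = c := hagr a y' c hfa hf'c
      rw [← hcy] at hf'c
      exact wo_irrefl hv y' hy'v (segiso_bounds s2 hf'c).2.2.2

theorem segiso_restrict (hsep : SeparationScheme atom mem LU (strLU atom mem))
    {w r v q f x y a' : M}
    (hw : IsWellOrderOn (fun z => ¬ atom z) mem r w)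
    (hv : IsWellOrderOn (fun z => ¬ atom z) mem q v)
    (s : SegIsoP atom mem w r v q f x y)
    (ha'w : mem a' w) (hra' : PairIn (fun z => ¬ atom z) mem r a' x) :
    ∃ f' b', PairIn (fun z => ¬ atom z) mem f a' b' ∧
      SegIsoP atom mem w r v q f' a' b' := by
  obtain ⟨b', hfb'⟩ := s.2.2.1 a' ha'w hra'
  have hb'bnd := segiso_bounds s hfb'
  have hQ : DfnA atom mem 3 (fun u => ∃ c d, IsOPair (fun z => ¬ atom z) mem (u 2) c d ∧
      PairIn (fun z => ¬ atom z) mem (u 0) c (u 1)) := by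
    have hb := DfnA.ex (DfnA.ex (DfnA.and
      (dfnA_IsOPair (atom := atom) (mem := mem) (2 : Fin 3).castSucc.castSucc
        ((Fin.last 3).castSucc) (Fin.last 4))
      (dfnA_PairIn (0 : Fin 3).castSucc.castSucc ((Fin.last 3).castSucc)
        (1 : Fin 3).castSucc.castSucc)))
    refine DfnA.congr hb fun u => ?_
    simp only [Fin.snoc_last, Fin.snoc_castSucc]
  obtain ⟨f', hf's, hf'el⟩ := sepA2 hsep
    (Q := fun pr pa p => ∃ c d, IsOPair (fun z => ¬ atom z) mem p c d ∧
      PairIn (fun z => ¬ atom z) mem pr c pa) hQ r a' f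
  have hchar : ∀ c d, PairIn (fun z => ¬ atom z) mem f' c d ↔
      (PairIn (fun z => ¬ atom z) mem f c d ∧
        PairIn (fun z => ¬ atom z) mem r c a') := by
    intro c d
    constructor
    · rintro ⟨p, hpf', hop⟩
      obtain ⟨hpf, c', d', hop', hrc'⟩ := (hf'el p).1 hpf'
      obtain ⟨rfl, rfl⟩ := opair_inj hop hop'
      exact ⟨⟨p, hpf, hop⟩, hrc'⟩
    · rintro ⟨⟨p, hpf, hop⟩, hrc⟩
      exact ⟨p, (hf'el p).2 ⟨hpf, c, d, hop, hrc⟩, hop⟩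
  refine ⟨f', b', hfb', hf's, ?_, ?_, ?_, ?_, ?_, ?_⟩
  · intro p hpf'
    obtain ⟨hpf, c, d, hop, hrc⟩ := (hf'el p).1 hpf'
    have hfcd : PairIn (fun z => ¬ atom z) mem f c d := ⟨p, hpf, hop⟩
    have hb := segiso_bounds s hfcd
    have hqd : PairIn (fun z => ¬ atom z) mem q d b' :=
      s.2.2.2.2.2.2 c a' d b' hfcd hfb' hrc
    exact ⟨c, d, hb.1, hrc, hb.2.2.1, hqd, hop⟩
  · intro a'' ha''w hlt
    obtain ⟨d, hd⟩ := s.2.2.1 a'' ha''w (wo_trans hw _ _ _ hlt hra')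
    exact ⟨d, (hchar a'' d).2 ⟨hd, hlt⟩⟩
  · intro a c c' h1 h2
    exact s.2.2.2.1 a c c' ((hchar a c).1 h1).1 ((hchar a c').1 h2).1
  · intro a a' c h1 h2
    exact s.2.2.2.2.1 a a' c ((hchar a c).1 h1).1 ((hchar a' c).1 h2).1
  · intro d hdv hqd
    have hqdy := wo_trans hv _ _ _ hqd hb'bnd.2.2.2
    obtain ⟨c, hfc⟩ := s.2.2.2.2.2.1 d hdv hqdy
    have hcb := segiso_bounds s hfc
    rcases wo_total hw c a' hcb.1 ha'w with rfl | hlt | hlt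
    · have : d = b' := s.2.2.2.1 c d b' hfc hfb'
      exact absurd (this ▸ hqd) (wo_irrefl hv b' hb'bnd.2.2.1)
    · exact ⟨c, (hchar c d).2 ⟨hfc, hlt⟩⟩
    · exact absurd (s.2.2.2.2.2.2 a' c b' d hfb' hfc hlt) (wo_asymm hv hqd)
  · intro a a' c c' h1 h2 hlt
    exact s.2.2.2.2.2.2 a a' c c' ((hchar a c).1 h1).1 ((hchar a' c').1 h2).1 hlt

theorem dfnA_notmem {m : ℕ} (i j : Fin m) :
    DfnA atom mem m (fun v => ¬ mem (v i) (v j)) :=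
  DfnA.not (dfnA_memE atom mem i j)

theorem dfnA_restrictQ : DfnA atom mem 3 (fun u => ∃ c d,
    IsOPair (fun z => ¬ atom z) mem (u 2) c d ∧
    PairIn (fun z => ¬ atom z) mem (u 0) c (u 1)) := by
  have hb := DfnA.ex (DfnA.ex (DfnA.and
    (dfnA_IsOPair (atom := atom) (mem := mem) (2 : Fin 3).castSucc.castSucc
      ((Fin.last 3).castSucc) (Fin.last 4))
    (dfnA_PairIn (0 : Fin 3).castSucc.castSucc ((Fin.last 3).castSucc)
      (1 : Fin 3).castSucc.castSucc)))
  refine DfnA.congr hb fun u => ?_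
  simp only [Fin.snoc_last, Fin.snoc_castSucc]

theorem comparability (hpair : PairingAx atom mem)
    (hsep : SeparationScheme atom mem LU (strLU atom mem))
    (hcol : CollectionScheme atom mem LU (strLU atom mem))
    {w r v q : M}
    (hw : IsWellOrderOn (fun z => ¬ atom z) mem r w)
    (hv : IsWellOrderOn (fun z => ¬ atom z) mem q v) :
    (∃ f, IsInjFuncInto (fun z => ¬ atom z) mem f w v ∧
      ∀ z y, (∃ x, mem x w ∧ PairIn (fun z => ¬ atom z) mem f x z) → mem y v →
        PairIn (fun z => ¬ atom z) mem q y z →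
        ∃ x, mem x w ∧ PairIn (fun z => ¬ atom z) mem f x y) ∨
    (∃ g, IsInjFuncInto (fun z => ¬ atom z) mem g v w ∧
      ∀ z y, (∃ x, mem x v ∧ PairIn (fun z => ¬ atom z) mem g x z) → mem y w →
        PairIn (fun z => ¬ atom z) mem r y z →
        ∃ x, mem x v ∧ PairIn (fun z => ¬ atom z) mem g x y) := by
  classical
  -- the domain D of comparable points
  have hQD : DfnA atom mem 5 (fun u => ∃ y f, mem y (u 2) ∧
      SegIsoP atom mem (u 0) (u 1) (u 2) (u 3) f (u 4) y) := by
    have hb := DfnA.ex (DfnA.ex (DfnA.and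
      (dfnA_memE atom mem ((Fin.last 5).castSucc) (2 : Fin 5).castSucc.castSucc)
      (dfnA_SegIsoP (0 : Fin 5).castSucc.castSucc (1 : Fin 5).castSucc.castSucc
        (2 : Fin 5).castSucc.castSucc (3 : Fin 5).castSucc.castSucc (Fin.last 6)
        (4 : Fin 5).castSucc.castSucc ((Fin.last 5).castSucc))))
    refine DfnA.congr hb fun u => ?_
    simp only [Fin.snoc_last, Fin.snoc_castSucc]
  obtain ⟨D, hDs, hDel⟩ := sepA4 hsep
    (Q := fun pw pr pv pq x => ∃ y f, mem y pv ∧ SegIsoP atom mem pw pr pv pq f x y)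
    hQD w r v q w
  -- collect the graph F
  have hQc : DfnA atom mem 6 (fun u => ∃ y f, mem y (u 2) ∧
      SegIsoP atom mem (u 0) (u 1) (u 2) (u 3) f (u 4) y ∧
      IsOPair (fun z => ¬ atom z) mem (u 5) (u 4) y) := by
    have hb := DfnA.ex (DfnA.ex (DfnA.and
      (dfnA_memE atom mem ((Fin.last 6).castSucc) (2 : Fin 6).castSucc.castSucc)
      (DfnA.and (dfnA_SegIsoP (0 : Fin 6).castSucc.castSucc (1 : Fin 6).castSucc.castSucc
        (2 : Fin 6).castSucc.castSucc (3 : Fin 6).castSucc.castSucc (Fin.last 7)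
        (4 : Fin 6).castSucc.castSucc ((Fin.last 6).castSucc))
      (dfnA_IsOPair (5 : Fin 6).castSucc.castSucc (4 : Fin 6).castSucc.castSucc
        ((Fin.last 6).castSucc)))))
    refine DfnA.congr hb fun u => ?_
    simp only [Fin.snoc_last, Fin.snoc_castSucc]
  obtain ⟨cF, -, hcF⟩ := colA4 hcol
    (Q := fun pw pr pv pq x p => ∃ y f, mem y pv ∧
      SegIsoP atom mem pw pr pv pq f x y ∧ IsOPair (fun z => ¬ atom z) mem p x y)
    hQc w r v q D
    (by
      intro x hxD
      obtain ⟨hxw, y, f, hyv, si⟩ := (hDel x).1 hxD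
      obtain ⟨p, hp⟩ := opair_exists hpair x y
      exact ⟨p, y, f, hyv, si, hp⟩)
  have hQF : DfnA atom mem 5 (fun u => ∃ x y f, mem x (u 0) ∧ mem y (u 2) ∧
      SegIsoP atom mem (u 0) (u 1) (u 2) (u 3) f x y ∧
      IsOPair (fun z => ¬ atom z) mem (u 4) x y) := by
    have hb := DfnA.ex (DfnA.ex (DfnA.ex (DfnA.and
      (dfnA_memE atom mem (Fin.last 5).castSucc.castSucc
        (0 : Fin 5).castSucc.castSucc.castSucc)
      (DfnA.and (dfnA_memE atom mem ((Fin.last 6).castSucc)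
        (2 : Fin 5).castSucc.castSucc.castSucc)
      (DfnA.and (dfnA_SegIsoP (0 : Fin 5).castSucc.castSucc.castSucc
        (1 : Fin 5).castSucc.castSucc.castSucc (2 : Fin 5).castSucc.castSucc.castSucc
        (3 : Fin 5).castSucc.castSucc.castSucc (Fin.last 7)
        (Fin.last 5).castSucc.castSucc ((Fin.last 6).castSucc))
      (dfnA_IsOPair (4 : Fin 5).castSucc.castSucc.castSucc
        (Fin.last 5).castSucc.castSucc ((Fin.last 6).castSucc)))))))
    refine DfnA.congr hb fun u => ?_
    simp only [Fin.snoc_last, Fin.snoc_castSucc]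
  obtain ⟨F, hFs, hFel⟩ := sepA4 hsep
    (Q := fun pw pr pv pq p => ∃ x y f, mem x pw ∧ mem y pv ∧
      SegIsoP atom mem pw pr pv pq f x y ∧ IsOPair (fun z => ¬ atom z) mem p x y)
    hQF w r v q cF
  have hFchar : ∀ x y, PairIn (fun z => ¬ atom z) mem F x y ↔
      (mem x w ∧ mem y v ∧ ∃ f, SegIsoP atom mem w r v q f x y) := by
    intro x y
    constructor
    · rintro ⟨p, hpF, hop⟩
      obtain ⟨-, x', y', f, hx'w, hy'v, si, hop'⟩ := (hFel p).1 hpF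
      obtain ⟨rfl, rfl⟩ := opair_inj hop hop'
      exact ⟨hx'w, hy'v, f, si⟩
    · rintro ⟨hxw, hyv, f, si⟩
      have hxD : mem x D := (hDel x).2 ⟨hxw, y, f, hyv, si⟩
      obtain ⟨p, hpcF, y0, f0, hy0v, si0, hop0⟩ := hcF x hxD
      have : y0 = y := segiso_unique hsep hw hv hy0v hyv si0 si
      rw [this] at hop0
      exact ⟨p, (hFel p).2 ⟨hpcF, x, y, f0, hxw, hyv, this ▸ si0, hop0⟩, hop0⟩
  have hFfun : ∀ x y y', PairIn (fun z => ¬ atom z) mem F x y →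
      PairIn (fun z => ¬ atom z) mem F x y' → y = y' := by
    intro x y y' h1 h2
    obtain ⟨-, hyv, f, si⟩ := (hFchar x y).1 h1
    obtain ⟨-, hy'v, f', si'⟩ := (hFchar x y').1 h2
    exact segiso_unique hsep hw hv hyv hy'v si si'
  have hFtotalD : ∀ x, mem x D → ∃ y, PairIn (fun z => ¬ atom z) mem F x y := by
    intro x hxD
    obtain ⟨hxw, y, f, hyv, si⟩ := (hDel x).1 hxD
    exact ⟨y, (hFchar x y).2 ⟨hxw, hyv, f, si⟩⟩
  have hFD : ∀ x y, PairIn (fun z => ¬ atom z) mem F x y → mem x D := by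
    intro x y h
    obtain ⟨hxw, hyv, f, si⟩ := (hFchar x y).1 h
    exact (hDel x).2 ⟨hxw, y, f, hyv, si⟩
  have hFord : ∀ x x' y y', PairIn (fun z => ¬ atom z) mem F x y →
      PairIn (fun z => ¬ atom z) mem F x' y' →
      PairIn (fun z => ¬ atom z) mem r x x' →
      PairIn (fun z => ¬ atom z) mem q y y' := by
    intro x x' y y' h1 h2 hlt
    obtain ⟨hxw, hyv, f, si⟩ := (hFchar x y).1 h1
    obtain ⟨hx'w, hy'v, f', si'⟩ := (hFchar x' y').1 h2
    obtain ⟨f'', b'', hf'xb'', si''⟩ := segiso_restrict hsep hw hv si' hxw hlt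
    have hb''v : mem b'' v := (segiso_bounds si' hf'xb'').2.2.1
    have : y = b'' := segiso_unique hsep hw hv hyv hb''v si si''
    rw [this]
    exact (segiso_bounds si' hf'xb'').2.2.2
  have hFinj : ∀ x x' y, PairIn (fun z => ¬ atom z) mem F x y →
      PairIn (fun z => ¬ atom z) mem F x' y → x = x' := by
    intro x x' y h1 h2
    have hxw := ((hFchar x y).1 h1).1
    have hx'w := ((hFchar x' y).1 h2).1
    have hyv := ((hFchar x y).1 h1).2.1
    rcases wo_total hw x x' hxw hx'w with h | h | h
    · exact h
    · exact absurd (hFord x x' y y h1 h2 h) (wo_irrefl hv y hyv)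
    · exact absurd (hFord x' x y y h2 h1 h) (wo_irrefl hv y hyv)
  have hFdown : ∀ x y b, PairIn (fun z => ¬ atom z) mem F x y → mem b v →
      PairIn (fun z => ¬ atom z) mem q b y →
      ∃ a, PairIn (fun z => ¬ atom z) mem F a b ∧
        PairIn (fun z => ¬ atom z) mem r a x := by
    intro x y b h1 hbv hqb
    obtain ⟨hxw, hyv, f, si⟩ := (hFchar x y).1 h1
    obtain ⟨a, hfab⟩ := si.2.2.2.2.2.1 b hbv hqb
    have hbnd := segiso_bounds si hfab
    obtain ⟨f2, b2, hfab2, si2⟩ := segiso_restrict hsep hw hv si hbnd.1 hbnd.2.1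
    have : b2 = b := si.2.2.2.1 a b2 b hfab2 hfab
    rw [this] at si2
    exact ⟨a, (hFchar a b).2 ⟨hbnd.1, hbv, f2, si2⟩, hbnd.2.1⟩
  have hDdown : ∀ x a, mem x D → mem a w →
      PairIn (fun z => ¬ atom z) mem r a x → mem a D := by
    intro x a hxD haw hlt
    obtain ⟨hxw, y, f, hyv, si⟩ := (hDel x).1 hxD
    obtain ⟨f2, b2, hfab2, si2⟩ := segiso_restrict hsep hw hv si haw hlt
    exact (hDel a).2 ⟨haw, b2, f2, (segiso_bounds si hfab2).2.2.1, si2⟩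
  -- complement of D in w
  obtain ⟨Dc, hDcs, hDcel⟩ := sepA1 hsep (Q := fun pD x => ¬ mem x pD)
    (dfnA_notmem (1 : Fin 2) (0 : Fin 2)) D w
  by_cases hDcne : ∃ x, mem x Dc
  · -- D is a proper initial segment of w; show v is exhausted
    obtain ⟨x0, hx0Dc, hx0min⟩ := wo_least hw Dc hDcs hDcne
      (fun x hx => ((hDcel x).1 hx).1)
    have hx0w : mem x0 w := ((hDcel x0).1 hx0Dc).1
    have hx0D : ¬ mem x0 D := ((hDcel x0).1 hx0Dc).2
    have hseg : ∀ a, mem a w → PairIn (fun z => ¬ atom z) mem r a x0 → mem a D := by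
      intro a haw hlt
      by_contra haD
      rcases hx0min a ((hDcel a).2 ⟨haw, haD⟩) with rfl | h'
      · exact wo_irrefl hw a haw hlt
      · exact wo_irrefl hw a haw (wo_trans hw _ _ _ hlt h')
    have hDeq : ∀ a, mem a D ↔ (mem a w ∧ PairIn (fun z => ¬ atom z) mem r a x0) := by
      intro a
      constructor
      · intro haD
        have haw : mem a w := ((hDel a).1 haD).1
        refine ⟨haw, ?_⟩
        rcases wo_total hw a x0 haw hx0w with rfl | h | h
        · exact absurd haD hx0D
        · exact h
        · exact absurd (hDdown a x0 haD hx0w h) hx0D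
      · rintro ⟨haw, hlt⟩
        exact hseg a haw hlt
    obtain ⟨im, hims, himel⟩ := image_exists hsep w F v
    obtain ⟨imc, himcs, himcel⟩ := sepA1 hsep (Q := fun pim y => ¬ mem y pim)
      (dfnA_notmem (1 : Fin 2) (0 : Fin 2)) im v
    by_cases himcne : ∃ y, mem y imc
    · -- v not exhausted: extend, contradiction
      exfalso
      obtain ⟨y0, hy0imc, hy0min⟩ := wo_least hv imc himcs himcne
        (fun y hy => ((himcel y).1 hy).1)
      have hy0v : mem y0 v := ((himcel y0).1 hy0imc).1
      have hy0im : ¬ mem y0 im := ((himcel y0).1 hy0imc).2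
      obtain ⟨f0, hf0s, hf0el⟩ := sepA2 hsep
        (Q := fun pr pa p => ∃ c d, IsOPair (fun z => ¬ atom z) mem p c d ∧
          PairIn (fun z => ¬ atom z) mem pr c pa) dfnA_restrictQ r x0 F
      have hf0char : ∀ c d, PairIn (fun z => ¬ atom z) mem f0 c d ↔
          (PairIn (fun z => ¬ atom z) mem F c d ∧
            PairIn (fun z => ¬ atom z) mem r c x0) := by
        intro c d
        constructor
        · rintro ⟨p, hpf0, hop⟩
          obtain ⟨hpF, c', d', hop', hrc'⟩ := (hf0el p).1 hpf0
          obtain ⟨rfl, rfl⟩ := opair_inj hop hop'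
          exact ⟨⟨p, hpF, hop⟩, hrc'⟩
        · rintro ⟨⟨p, hpF, hop⟩, hrc⟩
          exact ⟨p, (hf0el p).2 ⟨hpF, c, d, hop, hrc⟩, hop⟩
      have himF : ∀ c d, PairIn (fun z => ¬ atom z) mem F c d → mem d im := by
        intro c d h
        exact (himel d).2 ⟨((hFchar c d).1 h).2.1, c, ((hFchar c d).1 h).1, h⟩
      have hsi0 : SegIsoP atom mem w r v q f0 x0 y0 := by
        refine ⟨hf0s, ?_, ?_, ?_, ?_, ?_, ?_⟩
        · intro p hpf0
          obtain ⟨hpF, c, d, hop, hrc⟩ := (hf0el p).1 hpf0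
          have hFcd : PairIn (fun z => ¬ atom z) mem F c d := ⟨p, hpF, hop⟩
          have hcw := ((hFchar c d).1 hFcd).1
          have hdv := ((hFchar c d).1 hFcd).2.1
          have hdim : mem d im := himF c d hFcd
          have hqdy0 : PairIn (fun z => ¬ atom z) mem q d y0 := by
            rcases wo_total hv d y0 hdv hy0v with rfl | h | h
            · exact absurd hdim hy0im
            · exact h
            · obtain ⟨a, haF, -⟩ := hFdown c d y0 hFcd hy0v h
              exact absurd (himF a y0 haF) hy0im
          exact ⟨c, d, hcw, hrc, hdv, hqdy0, hop⟩
        · intro a haw hlt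
          obtain ⟨d, hd⟩ := hFtotalD a (hseg a haw hlt)
          exact ⟨d, (hf0char a d).2 ⟨hd, hlt⟩⟩
        · intro a c c' h1 h2
          exact hFfun a c c' ((hf0char a c).1 h1).1 ((hf0char a c').1 h2).1
        · intro a a' c h1 h2
          exact hFinj a a' c ((hf0char a c).1 h1).1 ((hf0char a' c).1 h2).1
        · intro d hdv hqd
          have hdim : mem d im := by
            by_contra hdim
            rcases hy0min d ((himcel d).2 ⟨hdv, hdim⟩) with rfl | h'
            · exact wo_irrefl hv d hdv hqd
            · exact wo_irrefl hv d hdv (wo_trans hv _ _ _ hqd h')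
          obtain ⟨-, x, hxw, hFxd⟩ := (himel d).1 hdim
          have hxD : mem x D := hFD x d hFxd
          exact ⟨x, (hf0char x d).2 ⟨hFxd, ((hDeq x).1 hxD).2⟩⟩
        · intro a a' c c' h1 h2 hlt
          exact hFord a a' c c' ((hf0char a c).1 h1).1 ((hf0char a' c').1 h2).1 hlt
      exact hx0D ((hDel x0).2 ⟨hx0w, y0, f0, hy0v, hsi0⟩)
    · -- v exhausted: inverse embedding v → w
      have hFfn : IsInjFuncInto (fun z => ¬ atom z) mem F D v := by
        refine ⟨⟨hFs, ?_, hFtotalD, hFfun⟩, ?_, hFinj⟩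
        · intro p hpF
          obtain ⟨-, x, y, f, hxw, hyv, si, hop⟩ := (hFel p).1 hpF
          have hFxy : PairIn (fun z => ¬ atom z) mem F x y := ⟨p, hpF, hop⟩
          exact ⟨x, y, hFD x y hFxy, hop⟩
        · intro x y h
          exact ((hFchar x y).1 h).2.1
      have hsurj : ∀ y, mem y v → ∃ x, mem x D ∧
          PairIn (fun z => ¬ atom z) mem F x y := by
        intro y hyv
        have hyim : mem y im := by
          by_contra hyim
          exact himcne ⟨y, (himcel y).2 ⟨hyv, hyim⟩⟩
        obtain ⟨-, x, hxw, hFxy⟩ := (himel y).1 hyim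
        exact ⟨x, hFD x y hFxy, hFxy⟩
      obtain ⟨g, hg, hgsurj, hgchar⟩ := inverse_exists hpair hsep hcol hFfn hsurj
      refine Or.inr ⟨g, ⟨hg.1, ?_, hg.2.2⟩, ?_⟩
      · intro y x h
        exact ((hDel x).1 (hg.2.1 y x h)).1
      · intro z y himg hyw hlt
        obtain ⟨b, hbv, hgbz⟩ := himg
        have hzD : mem z D := hg.2.1 b z hgbz
        have hyD : mem y D := hDdown z y hzD hyw hlt
        obtain ⟨c, hcv, hgcy⟩ := hgsurj y hyD
        exact ⟨c, hcv, hgcy⟩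
  · -- D = w : F embeds w into v
    have hDall : ∀ x, mem x w → mem x D := by
      intro x hxw
      by_contra hxD
      exact hDcne ⟨x, (hDcel x).2 ⟨hxw, hxD⟩⟩
    refine Or.inl ⟨F, ⟨⟨hFs, ?_, ?_, hFfun⟩, ?_, hFinj⟩, ?_⟩
    · intro p hpF
      obtain ⟨-, x, y, f, hxw, hyv, si, hop⟩ := (hFel p).1 hpF
      exact ⟨x, y, hxw, hop⟩
    · intro x hxw
      exact hFtotalD x (hDall x hxw)
    · intro x y h
      exact ((hFchar x y).1 h).2.1
    · intro z y himg hyv hlt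
      obtain ⟨x, hxw, hFxz⟩ := himg
      obtain ⟨a, haF, -⟩ := hFdown x z y hFxz hyv hlt
      exact ⟨a, ((hFchar a y).1 haF).1, haF⟩

/-- An embedding with downward-closed image is either onto or bounded by a point. -/
theorem embed_bound (hsep : SeparationScheme atom mem LU (strLU atom mem))
    {f a v q : M} (hv : IsWellOrderOn (fun z => ¬ atom z) mem q v)
    (hf : IsInjFuncInto (fun z => ¬ atom z) mem f a v)
    (hdown : ∀ z y, (∃ x, mem x a ∧ PairIn (fun z => ¬ atom z) mem f x z) → mem y v →
      PairIn (fun z => ¬ atom z) mem q y z →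
      ∃ x, mem x a ∧ PairIn (fun z => ¬ atom z) mem f x y) :
    (∀ y, mem y v → ∃ x, mem x a ∧ PairIn (fun z => ¬ atom z) mem f x y) ∨
    (∃ y0, mem y0 v ∧ ∀ z, (∃ x, mem x a ∧ PairIn (fun z => ¬ atom z) mem f x z) →
      PairIn (fun z => ¬ atom z) mem q z y0) := by
  have hQ : DfnA atom mem 3 (fun u => ¬ ∃ x, mem x (u 0) ∧
      PairIn (fun z => ¬ atom z) mem (u 1) x (u 2)) := by
    have hb := DfnA.not (DfnA.ex (DfnA.and
      (dfnA_memE atom mem (Fin.last 3) (0 : Fin 3).castSucc)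
      (dfnA_PairIn (1 : Fin 3).castSucc (Fin.last 3) (2 : Fin 3).castSucc)))
    refine DfnA.congr hb fun u => ?_
    simp only [Fin.snoc_last, Fin.snoc_castSucc]
  obtain ⟨NI, hNIs, hNIel⟩ := sepA2 hsep
    (Q := fun pa pf y => ¬ ∃ x, mem x pa ∧ PairIn (fun z => ¬ atom z) mem pf x y)
    hQ a f v
  by_cases hne : ∃ y, mem y NI
  · obtain ⟨y0, hy0NI, hy0min⟩ := wo_least hv NI hNIs hne (fun y hy => ((hNIel y).1 hy).1)
    have hy0v : mem y0 v := ((hNIel y0).1 hy0NI).1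
    have hy0no : ¬ ∃ x, mem x a ∧ PairIn (fun z => ¬ atom z) mem f x y0 :=
      ((hNIel y0).1 hy0NI).2
    refine Or.inr ⟨y0, hy0v, ?_⟩
    intro z himg
    have hzv : mem z v := by
      obtain ⟨x, hxa, hxz⟩ := himg
      exact hf.2.1 x z hxz
    rcases wo_total hv z y0 hzv hy0v with rfl | h | h
    · exact absurd himg hy0no
    · exact h
    · exact absurd (hdown z y0 himg hy0v h) hy0no
  · refine Or.inl fun y hyv => ?_
    by_contra hno
    exact hne ⟨y, (hNIel y).2 ⟨hyv, hno⟩⟩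

/-- An injective function gives an equinumerous copy inside the target. -/
theorem inj_gives_copy (hsep : SeparationScheme atom mem LU (strLU atom mem))
    {f a v : M} (hf : IsInjFuncInto (fun z => ¬ atom z) mem f a v) :
    ∃ im, ¬ atom im ∧ (∀ y, mem y im → mem y v) ∧
      EquinumerousI (fun z => ¬ atom z) mem a im := by
  obtain ⟨im, hims, himel⟩ := image_exists hsep a f v
  obtain ⟨h1, h2⟩ := bij_onto_image hf hims himel
  exact ⟨im, hims, fun y hy => ((himel y).1 hy).1, f, h1, h2⟩

theorem notBlocked_use {w₀ r₀ b : M} (h : ¬ BlockedSeg atom mem w₀ r₀ b) :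
    ∀ s, ¬ atom s → ∃ d c,
      (¬ atom d ∧ ∀ x, mem x d ↔ (mem x w₀ ∧ PairIn (fun z => ¬ atom z) mem r₀ x b)) ∧
      SetOfAtoms atom mem c ∧ DisjointS mem c s ∧
      EquinumerousI (fun z => ¬ atom z) mem d c := by
  intro s hs
  by_contra hcon
  exact h ⟨s, hs, fun d c hchar hca hcd heq => hcon ⟨d, c, hchar, hca, hcd, heq⟩⟩

/-- From an injection onto everything, an inverse equinumerosity. -/
theorem equi_symm_of_onto (hpair : PairingAx atom mem)
    (hsep : SeparationScheme atom mem LU (strLU atom mem))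
    (hcol : CollectionScheme atom mem LU (strLU atom mem))
    {f a v : M} (hf : IsInjFuncInto (fun z => ¬ atom z) mem f a v)
    (hsurj : ∀ y, mem y v → ∃ x, mem x a ∧ PairIn (fun z => ¬ atom z) mem f x y) :
    EquinumerousI (fun z => ¬ atom z) mem v a := by
  obtain ⟨g, hg, hgsurj, -⟩ := inverse_exists hpair hsep hcol hf hsurj
  exact ⟨g, hg, fun x hx => hgsurj x hx⟩

end DupAux

/-! ### Statement 2: the urelement duplication lemma -/

/-- **Urelement duplication.**  Assume `ZFU` plus the assertion that every set of
urelements is well-orderable.  Then there is a set `u` such that every set of urelements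
`w` disjoint from `u` can be duplicated: `w` is equinumerous with some set of urelements
`w'` disjoint from both `u` and `w`. -/
theorem urelement_duplication {M : Type u} (atom : M → Prop) (mem : M → M → Prop)
    (hZFU : ZFU atom mem)
    (hWO : ∀ w, SetOfAtoms atom mem w → WellOrderable (fun z => ¬ atom z) mem w) :
    ∃ u, ¬ atom u ∧
      ∀ w, SetOfAtoms atom mem w → DisjointS mem w u →
        ∃ w', SetOfAtoms atom mem w' ∧ DisjointS mem w' u ∧ DisjointS mem w' w ∧
          EquinumerousI (fun z => ¬ atom z) mem w w' := by
  classical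
  obtain ⟨hext, hae, hfound, hpairing, hunion, hpow, hinf, hsep, hcoll⟩ := hZFU
  obtain ⟨e, hes, heel⟩ := exists_emptyset hinf
  by_cases h0 : ∀ w, SetOfAtoms atom mem w → ∃ w', SetOfAtoms atom mem w' ∧
      DisjointS mem w' w ∧ EquinumerousI (fun z => ¬ atom z) mem w w'
  · refine ⟨e, hes, fun w hw _ => ?_⟩
    obtain ⟨w', h1, h2, h3⟩ := h0 w hw
    exact ⟨w', h1, fun ⟨z, _, hz⟩ => heel z hz, h2, h3⟩
  · push_neg at h0
    obtain ⟨w₀, hw₀a, hw₀bad⟩ := h0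
    obtain ⟨r₀, hr₀⟩ := hWO w₀ hw₀a
    obtain ⟨B, hBs, hBel⟩ := sepA2 hsep
      (Q := fun pw pr a => BlockedSeg atom mem pw pr a)
      (dfnA_BlockedSeg (0 : Fin 3) 1 2) w₀ r₀ w₀
    by_cases hBne : ∃ aa, mem aa B
    · obtain ⟨a0, ha0B, ha0min⟩ := wo_least hr₀ B hBs hBne (fun x hx => ((hBel x).1 hx).1)
      have ha0w : mem a0 w₀ := ((hBel a0).1 ha0B).1
      obtain ⟨s0, hs0s, hs0bl⟩ := ((hBel a0).1 ha0B).2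
      obtain ⟨u, hus, huel⟩ := sepA0 hsep (Q := fun z => atom z) (dfnA_atomE atom mem 0) s0
      refine ⟨u, hus, ?_⟩
      intro w hwa hwu
      obtain ⟨d0, hd0s, hd0el⟩ := sepA2 hsep
        (Q := fun pr pb x => PairIn (fun z => ¬ atom z) mem pr x pb)
        (dfnA_PairIn (atom := atom) (mem := mem) (0 : Fin 3) 2 1) r₀ a0 w₀
      have hd0sub : ∀ x, mem x d0 → mem x w₀ := fun x hx => ((hd0el x).1 hx).1
      obtain ⟨r1, hr1wo, hr1char⟩ := wo_restrict hsep hr₀ hd0s hd0sub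
      obtain ⟨rw, hrw⟩ := hWO w hwa
      have hwdisjs0 : ∀ z, mem z w → ¬ mem z s0 := by
        intro z hzw hzs
        exact hwu ⟨z, hzw, (huel z).2 ⟨hzs, hwa.2 z hzw⟩⟩
      rcases comparability hpairing hsep hcoll hrw hr1wo with ⟨f, hf, hfdown⟩ | ⟨g, hg, -⟩
      · rcases embed_bound hsep hr1wo hf hfdown with hsurj | ⟨y0, hy0d0, hy0bnd⟩
        · exfalso
          exact hs0bl d0 w ⟨hd0s, hd0el⟩ hwa
            (fun ⟨z, hzw, hzs⟩ => hwdisjs0 z hzw hzs)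
            (equi_symm_of_onto hpairing hsep hcoll hf hsurj)
        · have hy0w₀ : mem y0 w₀ := hd0sub y0 hy0d0
          have hy0lt : PairIn (fun z => ¬ atom z) mem r₀ y0 a0 := ((hd0el y0).1 hy0d0).2
          have hy0nB : ¬ mem y0 B := by
            intro hmem
            rcases ha0min y0 hmem with rfl | h'
            · exact wo_irrefl hr₀ y0 hy0w₀ hy0lt
            · exact wo_irrefl hr₀ y0 hy0w₀ (wo_trans hr₀ _ _ _ hy0lt h')
          have hy0nbl : ¬ BlockedSeg atom mem w₀ r₀ y0 :=
            fun hbl => hy0nB ((hBel y0).2 ⟨hy0w₀, hbl⟩)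
          obtain ⟨s, hss, hsel⟩ := binunion_exists hpairing hunion u w
          obtain ⟨d, c, ⟨hds, hdel⟩, hcatoms, hcdisj, hdc⟩ := notBlocked_use hy0nbl s hss
          have hfd : IsInjFuncInto (fun z => ¬ atom z) mem f w d := by
            refine ⟨hf.1, ?_, hf.2.2⟩
            intro x z hxz
            have hxw : mem x w := pairIn_dom hf.1 hxz
            have hzr1 : PairIn (fun z => ¬ atom z) mem r1 z y0 := hy0bnd z ⟨x, hxw, hxz⟩
            obtain ⟨hzd0, -, hzr₀⟩ := (hr1char z y0).1 hzr1
            exact (hdel z).2 ⟨hd0sub z hzd0, hzr₀⟩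
          obtain ⟨h, hh, hhsurj⟩ := hdc
          obtain ⟨e', he', -⟩ := comp_exists hpairing hsep hcoll hfd hh
          obtain ⟨w', hw's, hw'sub, hw'equi⟩ := inj_gives_copy hsep he'
          refine ⟨w', ⟨hw's, fun x hx => hcatoms.2 x (hw'sub x hx)⟩, ?_, ?_, hw'equi⟩
          · rintro ⟨z, hzw', hzu⟩
            exact hcdisj ⟨z, hw'sub z hzw', (hsel z).2 (Or.inl hzu)⟩
          · rintro ⟨z, hzw', hzw⟩
            exact hcdisj ⟨z, hw'sub z hzw', (hsel z).2 (Or.inr hzw)⟩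
      · exfalso
        obtain ⟨im, hims, himsub, himequi⟩ := inj_gives_copy hsep hg
        exact hs0bl d0 im ⟨hd0s, hd0el⟩
          ⟨hims, fun x hx => hwa.2 x (himsub x hx)⟩
          (fun ⟨z, hzim, hzs⟩ => hwdisjs0 z (himsub z hzim) hzs)
          himequi
    · refine ⟨w₀, hw₀a.1, ?_⟩
      intro w hwa hwdisj
      obtain ⟨rw, hrw⟩ := hWO w hwa
      rcases comparability hpairing hsep hcoll hrw hr₀ with ⟨f, hf, hfdown⟩ | ⟨g, hg, -⟩
      · rcases embed_bound hsep hr₀ hf hfdown with hsurj | ⟨y0, hy0w₀, hy0bnd⟩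
        · exfalso
          exact hw₀bad w hwa hwdisj (equi_symm_of_onto hpairing hsep hcoll hf hsurj)
        · have hy0nbl : ¬ BlockedSeg atom mem w₀ r₀ y0 :=
            fun hbl => hBne ⟨y0, (hBel y0).2 ⟨hy0w₀, hbl⟩⟩
          obtain ⟨s, hss, hsel⟩ := binunion_exists hpairing hunion w₀ w
          obtain ⟨d, c, ⟨hds, hdel⟩, hcatoms, hcdisj, hdc⟩ := notBlocked_use hy0nbl s hss
          have hfd : IsInjFuncInto (fun z => ¬ atom z) mem f w d := by
            refine ⟨hf.1, ?_, hf.2.2⟩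
            intro x z hxz
            have hxw : mem x w := pairIn_dom hf.1 hxz
            exact (hdel z).2 ⟨hf.2.1 x z hxz, hy0bnd z ⟨x, hxw, hxz⟩⟩
          obtain ⟨h, hh, hhsurj⟩ := hdc
          obtain ⟨e', he', -⟩ := comp_exists hpairing hsep hcoll hfd hh
          obtain ⟨w', hw's, hw'sub, hw'equi⟩ := inj_gives_copy hsep he'
          refine ⟨w', ⟨hw's, fun x hx => hcatoms.2 x (hw'sub x hx)⟩, ?_, ?_, hw'equi⟩
          · rintro ⟨z, hzw', hzu⟩
            exact hcdisj ⟨z, hw'sub z hzw', (hsel z).2 (Or.inl hzu)⟩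
          · rintro ⟨z, hzw', hzw⟩
            exact hcdisj ⟨z, hw'sub z hzw', (hsel z).2 (Or.inr hzw)⟩
      · exfalso
        obtain ⟨im, hims, himsub, himequi⟩ := inj_gives_copy hsep hg
        exact hw₀bad im ⟨hims, fun x hx => hwa.2 x (himsub x hx)⟩
          (fun ⟨z, hzim, hzw₀⟩ => hwdisj ⟨z, himsub z hzim, hzw₀⟩) himequi


end UST
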